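/- arXiv:2602.18302 — 5 statements merged into one kernel-verified Lean document; each statement's English description precedes it below -/
import Mathlib

section
/- Let β, γ ∈ ℂ be nonzero, let δ ∈ ℂ be nonzero and transcendental over ℚ, and define f(x) = x + β and g(x) = x/(γx + δ). Let c₁, c₂ ∈ ℂ(x) be rational functions such that c₁ ≠ f^m in ℂ(x) for every integer m ≥ 1 and c₂ ≠ g^n in ℂ(x) for every integer n ≥ 1. Then the set of λ ∈ ℂ that are not poles of c₁ or c₂ and for which there exist integers m, n ≥ 1 such that f^m(λ) = c₁(λ) and such that the orbit λ, g(λ), …, g^(n−1)(λ) avoids the pole −δ/γ and g^n(λ) = c₂(λ), is finite. -/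
open Polynomial Finset
set_option maxHeartbeats 2000000
set_option synthInstance.maxHeartbeats 400000


lemma iterF_pt (β : ℂ) (f : ℂ → ℂ) (hf : ∀ x, f x = x + β) (m : ℕ) (x : ℂ) :
    f^[m] x = x + m * β := by
  induction m with
  | zero => simp
  | succ k ih => rw [Function.iterate_succ_apply', ih, hf]; push_cast; ring

lemma iterF_rf (β : ℂ) (m : ℕ) :
    (fun r : RatFunc ℂ => r + RatFunc.C β)^[m] RatFunc.X
      = RatFunc.X + RatFunc.C ((m : ℂ) * β) := by
  induction m with
  | zero => simp
  | succ k ih =>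
      rw [Function.iterate_succ_apply', ih]
      rw [add_assoc, ← map_add]
      congr 1
      push_cast
      ring

lemma iterG_pt (γ δ : ℂ) (g : ℂ → ℂ) (hg : ∀ x, g x = x / (γ * x + δ)) (n : ℕ) (x : ℂ)
    (h : ∀ i < n, γ * g^[i] x + δ ≠ 0) :
    (γ * (∑ i ∈ range n, δ ^ i) * x + δ ^ n ≠ 0) ∧
      g^[n] x = x / (γ * (∑ i ∈ range n, δ ^ i) * x + δ ^ n) := by
  induction n with
  | zero => simp
  | succ k ih =>
      obtain ⟨hq, hgk⟩ := ih (fun i hi => h i (by omega))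
      have hden : γ * g^[k] x + δ ≠ 0 := h k (by omega)
      have key : γ * (∑ i ∈ range (k+1), δ ^ i) * x + δ ^ (k+1)
          = (γ * g^[k] x + δ) * (γ * (∑ i ∈ range k, δ ^ i) * x + δ ^ k) := by
        rw [hgk, geom_sum_succ]
        field_simp
        ring
      constructor
      · rw [key]; exact mul_ne_zero hden hq
      · rw [Function.iterate_succ_apply', hg, hgk, key]
        rw [hgk] at hden ⊢
        field_simp

lemma iterG_rf (γ δ : ℂ) (hδ : δ ≠ 0) (n : ℕ) :
    (fun r : RatFunc ℂ => r / (RatFunc.C γ * r + RatFunc.C δ))^[n] RatFunc.X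
      = RatFunc.X / (RatFunc.C (γ * ∑ i ∈ range n, δ ^ i) * RatFunc.X + RatFunc.C (δ ^ n)) := by
  have hden : ∀ k : ℕ, (RatFunc.C (γ * ∑ i ∈ range k, δ ^ i) * RatFunc.X + RatFunc.C (δ ^ k)) ≠ 0 := by
    intro k
    have heq : (RatFunc.C (γ * ∑ i ∈ range k, δ ^ i) * RatFunc.X + RatFunc.C (δ ^ k))
        = algebraMap (Polynomial ℂ) (RatFunc ℂ) (Polynomial.C (γ * ∑ i ∈ range k, δ ^ i) * Polynomial.X + Polynomial.C (δ ^ k)) := by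
      simp [RatFunc.algebraMap_C, RatFunc.algebraMap_X, map_add, map_mul]
    rw [heq]
    apply RatFunc.algebraMap_ne_zero
    intro h0
    have h1 := congrArg (Polynomial.eval 0) h0
    simp at h1
    exact hδ h1.1
  induction n with
  | zero => simp
  | succ k ih =>
      rw [Function.iterate_succ_apply', ih]
      have hqk := hden k
      have hqk1 := hden (k+1)
      set Qk : RatFunc ℂ := RatFunc.C (γ * ∑ i ∈ range k, δ ^ i) * RatFunc.X + RatFunc.C (δ ^ k) with hQk
      set Qk1 : RatFunc ℂ := RatFunc.C (γ * ∑ i ∈ range (k+1), δ ^ i) * RatFunc.X + RatFunc.C (δ ^ (k+1)) with hQk1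
      have key : RatFunc.C γ * (RatFunc.X / Qk) + RatFunc.C δ = Qk1 / Qk := by
        rw [eq_div_iff hqk, add_mul, mul_assoc, div_mul_cancel₀ _ hqk, hQk, hQk1, geom_sum_succ]
        push_cast [map_add, map_mul, map_pow, map_one]
        ring
      show RatFunc.X / Qk / (RatFunc.C γ * (RatFunc.X / Qk) + RatFunc.C δ) = RatFunc.X / Qk1
      rw [key, div_div_div_cancel_right₀]
      exact hqk

lemma kernel_exists {ι : Type} [Fintype ι] (P : ι → Polynomial ℂ) (M : ℕ)
    (hdeg : ∀ p, (P p).degree < M) (hcard : M < Fintype.card ι) :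
    ∃ q : ι → ℂ, q ≠ 0 ∧ ∑ p, q p • P p = 0 := by
  classical
  let ψ : (ι → ℂ) →ₗ[ℂ] Polynomial ℂ :=
    ∑ p : ι, (LinearMap.proj p).smulRight (P p)
  have hψ : ∀ q : ι → ℂ, ψ q = ∑ p, q p • P p := by
    intro q
    simp [ψ, LinearMap.sum_apply]
  have hmem : ∀ q : ι → ℂ, ψ q ∈ degreeLT ℂ M := by
    intro q
    rw [hψ]
    apply Submodule.sum_mem
    intro p _
    rw [mem_degreeLT]
    exact lt_of_le_of_lt (degree_smul_le _ _) (hdeg p)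
  let φ : (ι → ℂ) →ₗ[ℂ] degreeLT ℂ M := ψ.codRestrict _ hmem
  haveI : Module.Finite ℂ (degreeLT ℂ M) := Module.Finite.equiv (degreeLTEquiv ℂ M).symm
  have hnotinj : ¬ Function.Injective φ := by
    intro hinj
    have h1 := LinearMap.finrank_le_finrank_of_injective hinj
    rw [Module.finrank_fintype_fun_eq_card, (degreeLTEquiv ℂ M).finrank_eq,
      Module.finrank_fintype_fun_eq_card, Fintype.card_fin] at h1
    omega
  rw [Function.not_injective_iff] at hnotinj
  obtain ⟨a, b, hab, hne⟩ := hnotinj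
  refine ⟨a - b, sub_ne_zero.mpr hne, ?_⟩
  have : ψ (a - b) = 0 := by
    have := congrArg Subtype.val (congrArg (fun x => x) hab)
    have h2 : ψ a = ψ b := congrArg Subtype.val hab
    rw [map_sub, h2, sub_self]
  rw [hψ] at this
  exact this

lemma block_zero (N Δ n : ℕ) (hn : Δ < n) (P : Fin N → Polynomial ℚ)
    (hdeg : ∀ t, (P t).natDegree ≤ Δ)
    (h0 : ∑ t : Fin N, P t * Polynomial.X ^ (n * (t : ℕ)) = 0) : ∀ t, P t = 0 := by
  intro t₀
  ext d
  simp only [coeff_zero]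
  by_cases hd : d ≤ Δ
  · have h1 := congrArg (fun p => Polynomial.coeff p (n * (t₀ : ℕ) + d)) h0
    simp only [coeff_zero, finset_sum_coeff] at h1
    rw [Finset.sum_eq_single t₀] at h1
    · rwa [coeff_mul_X_pow', if_pos (Nat.le_add_right _ _), Nat.add_sub_cancel_left] at h1
    · intro t _ hne
      rw [coeff_mul_X_pow']
      rcases lt_trichotomy (t : ℕ) (t₀ : ℕ) with hlt | heq | hgt
      · rw [if_pos]
        · apply coeff_eq_zero_of_natDegree_lt
          have h2 : n * (t : ℕ) + n * ((t₀ : ℕ) - (t : ℕ)) = n * (t₀ : ℕ) := by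
            rw [← Nat.mul_add, Nat.add_sub_cancel' (le_of_lt hlt)]
          have h3 : n ≤ n * ((t₀ : ℕ) - (t : ℕ)) :=
            Nat.le_mul_of_pos_right n (by omega)
          calc (P t).natDegree ≤ Δ := hdeg t
            _ < n * (t₀ : ℕ) + d - n * (t : ℕ) := by omega
        · have : (t : ℕ) ≤ (t₀ : ℕ) := le_of_lt hlt
          calc n * (t : ℕ) ≤ n * (t₀ : ℕ) := Nat.mul_le_mul_left n this
            _ ≤ n * (t₀ : ℕ) + d := Nat.le_add_right _ _
      · exact absurd (Fin.ext heq) hne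
      · rw [if_neg]
        have h3 : n * ((t₀ : ℕ) + 1) ≤ n * (t : ℕ) := Nat.mul_le_mul_left n (by omega)
        rw [Nat.mul_add, Nat.mul_one] at h3
        omega
    · intro h; exact absurd (Finset.mem_univ t₀) h
  · exact coeff_eq_zero_of_natDegree_lt (lt_of_le_of_lt (hdeg t₀) (by omega))

lemma proj_exists {ι : Type} [Fintype ι] (δ : ℂ) (htr : Transcendental ℚ δ)
    (q : ι → ℂ) (p₀ : ι) (h0 : q p₀ ≠ 0) :
    ∃ pt : ι → Polynomial ℚ, pt p₀ ≠ 0 ∧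
      ∀ c : ι → Polynomial ℚ,
        (∑ p, q p * Polynomial.aeval δ (c p) = 0) → ∑ p, pt p * c p = 0 := by
  classical
  set K := IntermediateField.adjoin ℚ ({δ} : Set ℂ) with hK
  have hδK : δ ∈ K := IntermediateField.mem_adjoin_simple_self ℚ δ
  set gen : K := ⟨δ, hδK⟩ with hgen
  -- linear functional
  have hli : LinearIndepOn K id ({q p₀} : Set ℂ) :=
    LinearIndepOn.singleton (v := id) h0
  let b := Module.Basis.extend hli
  have hmem : q p₀ ∈ hli.extend (Set.subset_univ _) :=
    hli.subset_extend _ (Set.mem_singleton _)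
  let j : hli.extend (Set.subset_univ _) := ⟨q p₀, hmem⟩
  let φ : ℂ →ₗ[K] K := b.coord j
  have hφ1 : φ (q p₀) = 1 := by
    have : q p₀ = b j := (Module.Basis.extend_apply_self hli j).symm
    rw [this]
    simp [φ, Module.Basis.coord_apply]
  -- representations
  have hrep : ∀ p : ι, ∃ a bb : Polynomial ℚ,
      (algebraMap K ℂ (φ (q p)) = Polynomial.aeval δ a / Polynomial.aeval δ bb)
      ∧ Polynomial.aeval δ bb ≠ 0 := by
    intro p
    have hmem2 : (algebraMap K ℂ (φ (q p))) ∈ K := (φ (q p)).2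
    rw [IntermediateField.mem_adjoin_simple_iff] at hmem2
    obtain ⟨a, bb, hab⟩ := hmem2
    by_cases hbb : Polynomial.aeval δ bb = 0
    · refine ⟨0, 1, ?_, by simp⟩
      rw [hab, hbb]
      simp
    · exact ⟨a, bb, hab, hbb⟩
  choose aa bb hab hbb using hrep
  refine ⟨fun p => aa p * ∏ p' ∈ univ.erase p, bb p', ?_, ?_⟩
  · intro hzero
    have hzero' : aa p₀ * ∏ p' ∈ univ.erase p₀, bb p' = 0 := hzero
    have h1 : Polynomial.aeval δ (aa p₀ * ∏ p' ∈ univ.erase p₀, bb p') = 0 := by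
      rw [hzero']; simp
    rw [map_mul] at h1
    have h2 : Polynomial.aeval δ (aa p₀) = algebraMap K ℂ (φ (q p₀)) * Polynomial.aeval δ (bb p₀) := by
      rw [hab p₀, div_mul_cancel₀ _ (hbb p₀)]
    rw [h2, hφ1, map_one, one_mul] at h1
    have h3 : Polynomial.aeval δ (bb p₀) * Polynomial.aeval δ (∏ p' ∈ univ.erase p₀, bb p') ≠ 0 := by
      rw [map_prod]
      exact mul_ne_zero (hbb p₀) (Finset.prod_ne_zero_iff.mpr fun p' _ => hbb p')
    exact h3 h1
  · intro c hrel
    -- relation in K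
    have hrelK : ∑ p, (Polynomial.aeval gen (c p) : K) • q p = 0 := by
      rw [← hrel]
      apply Finset.sum_congr rfl
      intro p _
      rw [Algebra.smul_def, mul_comm]
      congr 1
      exact (Polynomial.aeval_algHom_apply K.val gen (c p)).symm
    have hφrel : ∑ p, (Polynomial.aeval gen (c p) : K) * φ (q p) = 0 := by
      have := congrArg φ hrelK
      rw [map_sum, map_zero] at this
      rw [← this]
      apply Finset.sum_congr rfl
      intro p _
      rw [map_smul, smul_eq_mul]
    -- push to ℂ
    have hCrel : ∑ p, Polynomial.aeval δ (c p) * algebraMap K ℂ (φ (q p)) = 0 := by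
      have := congrArg (algebraMap K ℂ) hφrel
      rw [map_sum, map_zero] at this
      rw [← this]
      apply Finset.sum_congr rfl
      intro p _
      rw [map_mul]
      congr 1
      exact Polynomial.aeval_algHom_apply K.val gen (c p)
    -- multiply by product of denominators
    apply transcendental_iff_injective.mp htr
    rw [map_zero, map_sum]
    have key : ∀ p : ι, Polynomial.aeval δ (aa p * ∏ p' ∈ univ.erase p, bb p')
        = algebraMap K ℂ (φ (q p)) * ∏ p' : ι, Polynomial.aeval δ (bb p') := by
      intro p
      have h4 : Polynomial.aeval δ (aa p) = algebraMap K ℂ (φ (q p)) * Polynomial.aeval δ (bb p) := by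
        rw [hab p, div_mul_cancel₀ _ (hbb p)]
      rw [map_mul, map_prod, h4, mul_assoc]
      congr 1
      exact Finset.mul_prod_erase univ (fun x => Polynomial.aeval δ (bb x)) (Finset.mem_univ p)
    calc ∑ p, Polynomial.aeval δ ((aa p * ∏ p' ∈ univ.erase p, bb p') * c p)
        = (∑ p, Polynomial.aeval δ (c p) * algebraMap K ℂ (φ (q p))) * ∏ p' : ι, Polynomial.aeval δ (bb p') := by
          rw [Finset.sum_mul]
          apply Finset.sum_congr rfl
          intro p _
          rw [map_mul, key p]
          ring
      _ = 0 := by rw [hCrel, zero_mul]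

/-- Proposition 2.8: finiteness when `δ` is transcendental,
`f(x) = x + β`, `g(x) = x/(γx + δ)`. -/
theorem stmt7 (β γ δ : ℂ) (hβ : β ≠ 0) (hγ : γ ≠ 0) (hδ : δ ≠ 0)
    (htr : Transcendental ℚ δ)
    (f g : ℂ → ℂ)
    (hf : ∀ x, f x = x + β) (hg : ∀ x, g x = x / (γ * x + δ))
    (c₁ c₂ : RatFunc ℂ)
    (hc₁ : ∀ m : ℕ, 1 ≤ m →
      c₁ ≠ (fun r : RatFunc ℂ => r + RatFunc.C β)^[m] RatFunc.X)
    (hc₂ : ∀ n : ℕ, 1 ≤ n →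
      c₂ ≠ (fun r : RatFunc ℂ => r / (RatFunc.C γ * r + RatFunc.C δ))^[n] RatFunc.X) :
    {l : ℂ | c₁.denom.eval l ≠ 0 ∧ c₂.denom.eval l ≠ 0 ∧
        ∃ m n : ℕ, 1 ≤ m ∧ 1 ≤ n ∧
          f^[m] l = c₁.eval (RingHom.id ℂ) l ∧
          (∀ i < n, γ * g^[i] l + δ ≠ 0) ∧
          g^[n] l = c₂.eval (RingHom.id ℂ) l}.Finite := by
  classical
  set S : Set ℂ := {l : ℂ | c₁.denom.eval l ≠ 0 ∧ c₂.denom.eval l ≠ 0 ∧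
        ∃ m n : ℕ, 1 ≤ m ∧ 1 ≤ n ∧
          f^[m] l = c₁.eval (RingHom.id ℂ) l ∧
          (∀ i < n, γ * g^[i] l + δ ≠ 0) ∧
          g^[n] l = c₂.eval (RingHom.id ℂ) l} with hSdef
  by_contra hfin
  have hS : S.Infinite := hfin
  set A : Polynomial ℂ := c₁.num with hA
  set B : Polynomial ℂ := c₁.denom with hB
  set Cp : Polynomial ℂ := c₂.num with hCp
  set Dp : Polynomial ℂ := c₂.denom with hDp
  -- extraction of algebraic relations
  have hmain : ∀ l ∈ S, ∃ m n : ℕ, 1 ≤ m ∧ 1 ≤ n ∧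
      B.eval l ≠ 0 ∧ Dp.eval l ≠ 0 ∧
      A.eval l = (l + (m : ℂ) * β) * B.eval l ∧
      Cp.eval l * (γ * (∑ i ∈ range n, δ ^ i) * l + δ ^ n) = l * Dp.eval l := by
    intro l hl
    obtain ⟨hd₁, hd₂, m, n, hm, hn, h1, h2, h3⟩ := hl
    have hev₁ : c₁.eval (RingHom.id ℂ) l = A.eval l / B.eval l := rfl
    have hev₂ : c₂.eval (RingHom.id ℂ) l = Cp.eval l / Dp.eval l := rfl
    refine ⟨m, n, hm, hn, hd₁, hd₂, ?_, ?_⟩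
    · rw [iterF_pt β f hf m l, hev₁] at h1
      exact ((eq_div_iff hd₁).mp h1).symm
    · obtain ⟨hqne, hgn⟩ := iterG_pt γ δ g hg n l h2
      rw [hgn, hev₂] at h3
      exact ((div_eq_div_iff hqne hd₂).mp h3).symm
  -- fibers over m are finite
  have hfibm : ∀ m : ℕ, 1 ≤ m → {l : ℂ | A.eval l = (l + (m : ℂ) * β) * B.eval l}.Finite := by
    intro m hm
    have hP : A - (Polynomial.X + Polynomial.C ((m : ℂ) * β)) * B ≠ 0 := by
      intro h
      apply hc₁ m hm
      rw [iterF_rf]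
      have h' : A = (Polynomial.X + Polynomial.C ((m : ℂ) * β)) * B := sub_eq_zero.mp h
      have hBne : (algebraMap (Polynomial ℂ) (RatFunc ℂ)) B ≠ 0 :=
        RatFunc.algebraMap_ne_zero (RatFunc.denom_ne_zero c₁)
      calc c₁ = algebraMap _ _ A / algebraMap _ _ B := (RatFunc.num_div_denom c₁).symm
        _ = algebraMap (Polynomial ℂ) (RatFunc ℂ)
              ((Polynomial.X + Polynomial.C ((m : ℂ) * β)) * B) / algebraMap _ _ B := by rw [← h']
        _ = algebraMap (Polynomial ℂ) (RatFunc ℂ) (Polynomial.X + Polynomial.C ((m : ℂ) * β)) := by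
            rw [map_mul, mul_div_assoc, div_self hBne, mul_one]
        _ = RatFunc.X + RatFunc.C ((m : ℂ) * β) := by
            rw [map_add, RatFunc.algebraMap_X, RatFunc.algebraMap_C]
    apply Set.Finite.subset (Polynomial.finite_setOf_isRoot hP)
    intro l hl
    simp only [Set.mem_setOf_eq] at hl ⊢
    show Polynomial.IsRoot _ l
    simp only [Polynomial.IsRoot, Polynomial.eval_sub, Polynomial.eval_mul, Polynomial.eval_add,
      Polynomial.eval_X, Polynomial.eval_C]
    rw [hl]
    ring
  -- fibers over n are finite
  have hfibn : ∀ n : ℕ, 1 ≤ n →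
      {l : ℂ | Cp.eval l * (γ * (∑ i ∈ range n, δ ^ i) * l + δ ^ n) = l * Dp.eval l}.Finite := by
    intro n hn
    set qp : Polynomial ℂ := Polynomial.C (γ * ∑ i ∈ range n, δ ^ i) * Polynomial.X
        + Polynomial.C (δ ^ n) with hqp
    have hqpne : qp ≠ 0 := by
      intro h
      have h1 := congrArg (Polynomial.eval 0) h
      simp [hqp] at h1
      exact hδ h1.1
    have hP : Cp * qp - Polynomial.X * Dp ≠ 0 := by
      intro h
      apply hc₂ n hn
      rw [iterG_rf γ δ hδ n]
      have h' : Cp * qp = Polynomial.X * Dp := sub_eq_zero.mp h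
      have hD : (algebraMap (Polynomial ℂ) (RatFunc ℂ)) Dp ≠ 0 :=
        RatFunc.algebraMap_ne_zero (RatFunc.denom_ne_zero c₂)
      have hQ : (algebraMap (Polynomial ℂ) (RatFunc ℂ)) qp ≠ 0 :=
        RatFunc.algebraMap_ne_zero hqpne
      calc c₂ = algebraMap _ _ Cp / algebraMap _ _ Dp := (RatFunc.num_div_denom c₂).symm
        _ = algebraMap (Polynomial ℂ) (RatFunc ℂ) Polynomial.X / algebraMap _ _ qp := by
            rw [div_eq_div_iff hD hQ, ← map_mul, ← map_mul]
            exact congrArg _ h'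
        _ = RatFunc.X / (RatFunc.C (γ * ∑ i ∈ range n, δ ^ i) * RatFunc.X
              + RatFunc.C (δ ^ n)) := by
            rw [hqp, map_add, map_mul, RatFunc.algebraMap_X, RatFunc.algebraMap_C,
              RatFunc.algebraMap_C]
    apply Set.Finite.subset (Polynomial.finite_setOf_isRoot hP)
    intro l hl
    simp only [Set.mem_setOf_eq] at hl ⊢
    show Polynomial.IsRoot _ l
    simp only [Polynomial.IsRoot, Polynomial.eval_sub, Polynomial.eval_mul, Polynomial.eval_add,
      Polynomial.eval_X, Polynomial.eval_C, hqp]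
    linear_combination hl
  -- the good set
  set S' : Set ℂ := S \ {0, (1 - δ)/γ} with hS'def
  have hS' : S'.Infinite := hS.diff ((Set.finite_singleton ((1 - δ)/γ)).insert 0)
  -- auxiliary polynomials
  set U₁ : Polynomial ℂ := A - Polynomial.X * B with hU₁
  set U₂ : Polynomial ℂ := Polynomial.C β * B with hU₂
  set V₁ : Polynomial ℂ := Polynomial.X * (Polynomial.C (δ - 1) * Dp + Polynomial.C γ * Cp) with hV₁
  set V₂ : Polynomial ℂ := Cp * (Polynomial.C γ * Polynomial.X + Polynomial.C (δ - 1)) with hV₂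
  set D0 : ℕ := U₁.natDegree + U₂.natDegree + V₁.natDegree + V₂.natDegree with hD0
  set N : ℕ := D0 + 2 with hN
  -- kernel vector
  obtain ⟨q, hq0, hker⟩ := kernel_exists
    (fun p : Fin N × Fin N =>
      U₁ ^ (p.1 : ℕ) * U₂ ^ (N - 1 - (p.1 : ℕ)) * V₁ ^ (p.2 : ℕ) * V₂ ^ (N - 1 - (p.2 : ℕ)))
    ((N - 1) * D0 + 1)
    (by
      intro p
      apply lt_of_le_of_lt Polynomial.degree_le_natDegree
      have hb : (U₁ ^ (p.1 : ℕ) * U₂ ^ (N - 1 - (p.1 : ℕ)) * V₁ ^ (p.2 : ℕ)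
          * V₂ ^ (N - 1 - (p.2 : ℕ))).natDegree ≤ (N - 1) * D0 := by
        have h1 := p.1.isLt
        have h2 := p.2.isLt
        calc (U₁ ^ (p.1 : ℕ) * U₂ ^ (N - 1 - (p.1 : ℕ)) * V₁ ^ (p.2 : ℕ)
              * V₂ ^ (N - 1 - (p.2 : ℕ))).natDegree
            ≤ (U₁ ^ (p.1 : ℕ) * U₂ ^ (N - 1 - (p.1 : ℕ)) * V₁ ^ (p.2 : ℕ)).natDegree
              + (V₂ ^ (N - 1 - (p.2 : ℕ))).natDegree := Polynomial.natDegree_mul_le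
          _ ≤ ((U₁ ^ (p.1 : ℕ) * U₂ ^ (N - 1 - (p.1 : ℕ))).natDegree
              + (V₁ ^ (p.2 : ℕ)).natDegree) + (V₂ ^ (N - 1 - (p.2 : ℕ))).natDegree :=
                add_le_add_left Polynomial.natDegree_mul_le _
          _ ≤ (((U₁ ^ (p.1 : ℕ)).natDegree + (U₂ ^ (N - 1 - (p.1 : ℕ))).natDegree)
              + (V₁ ^ (p.2 : ℕ)).natDegree) + (V₂ ^ (N - 1 - (p.2 : ℕ))).natDegree :=
                add_le_add_left (add_le_add_left Polynomial.natDegree_mul_le _) _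
          _ ≤ (((p.1 : ℕ) * U₁.natDegree + (N - 1 - (p.1 : ℕ)) * U₂.natDegree)
              + (p.2 : ℕ) * V₁.natDegree) + (N - 1 - (p.2 : ℕ)) * V₂.natDegree :=
                add_le_add (add_le_add (add_le_add Polynomial.natDegree_pow_le
                  Polynomial.natDegree_pow_le) Polynomial.natDegree_pow_le)
                  Polynomial.natDegree_pow_le
          _ ≤ (((N - 1) * U₁.natDegree + (N - 1) * U₂.natDegree)
              + (N - 1) * V₁.natDegree) + (N - 1) * V₂.natDegree := by
                have hi' : (p.1 : ℕ) ≤ N - 1 := Nat.le_pred_of_lt p.1.isLt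
                have ht' : (p.2 : ℕ) ≤ N - 1 := Nat.le_pred_of_lt p.2.isLt
                exact add_le_add (add_le_add (add_le_add
                  (Nat.mul_le_mul_right _ hi') (Nat.mul_le_mul_right _ (Nat.sub_le _ _)))
                  (Nat.mul_le_mul_right _ ht')) (Nat.mul_le_mul_right _ (Nat.sub_le _ _))
          _ = (N - 1) * D0 := by rw [hD0]; ring
      exact_mod_cast Nat.lt_succ_of_le hb)
    (by
      rw [Fintype.card_prod, Fintype.card_fin]
      have h1 : N - 1 = D0 + 1 := by omega
      have h2 : N = D0 + 2 := hN
      rw [h1, h2]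
      nlinarith [sq_nonneg D0])
  -- the pointwise relation
  have hrel : ∀ l ∈ S', ∃ m n : ℕ, 1 ≤ m ∧ 1 ≤ n ∧
      A.eval l = (l + (m : ℂ) * β) * B.eval l ∧
      Cp.eval l * (γ * (∑ i ∈ range n, δ ^ i) * l + δ ^ n) = l * Dp.eval l ∧
      ∑ p : Fin N × Fin N, q p * (m : ℂ) ^ (p.1 : ℕ) * δ ^ (n * (p.2 : ℕ)) = 0 := by
    intro l hl
    obtain ⟨m, n, hm, hn, hBne, hDne, hE1, hE2⟩ := hmain l hl.1
    refine ⟨m, n, hm, hn, hE1, hE2, ?_⟩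
    have hl0 : l ≠ 0 := by
      intro h
      exact hl.2 (by rw [h]; exact Set.mem_insert _ _)
    have hlγ : γ * l + (δ - 1) ≠ 0 := by
      intro h
      apply hl.2
      have hlval : l = (1 - δ) / γ := by
        field_simp
        linear_combination h
      rw [hlval]
      exact Set.mem_insert_iff.mpr (Or.inr rfl)
    have hCl : Cp.eval l ≠ 0 := by
      intro h
      rw [h, zero_mul] at hE2
      exact hl0 ((mul_eq_zero.mp hE2.symm).resolve_right hDne)
    have hu2 : U₂.eval l ≠ 0 := by
      rw [hU₂, Polynomial.eval_mul, Polynomial.eval_C]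
      exact mul_ne_zero hβ hBne
    have hu1 : U₁.eval l = (m : ℂ) * U₂.eval l := by
      rw [hU₁, hU₂]
      simp only [Polynomial.eval_sub, Polynomial.eval_mul, Polynomial.eval_X, Polynomial.eval_C]
      linear_combination hE1
    have hv2 : V₂.eval l ≠ 0 := by
      rw [hV₂]
      simp only [Polynomial.eval_mul, Polynomial.eval_add, Polynomial.eval_X, Polynomial.eval_C]
      exact mul_ne_zero hCl hlγ
    have hgs : (∑ i ∈ range n, δ ^ i) * (δ - 1) = δ ^ n - 1 := geom_sum_mul δ n
    have hv1 : V₁.eval l = δ ^ n * V₂.eval l := by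
      rw [hV₁, hV₂]
      simp only [Polynomial.eval_mul, Polynomial.eval_add, Polynomial.eval_X, Polynomial.eval_C]
      linear_combination (1 - δ) * hE2 + γ * l * (Cp.eval l) * hgs
    have h5 := congrArg (Polynomial.eval l) hker
    rw [Polynomial.eval_finset_sum] at h5
    simp only [Polynomial.eval_smul, smul_eq_mul, Polynomial.eval_mul, Polynomial.eval_pow,
      Polynomial.eval_zero] at h5
    have h6 : ∑ p : Fin N × Fin N, (q p * (m : ℂ) ^ (p.1 : ℕ) * δ ^ (n * (p.2 : ℕ)))
        * (U₂.eval l ^ (N - 1) * V₂.eval l ^ (N - 1)) = 0 := by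
      rw [← h5]
      apply Finset.sum_congr rfl
      intro p _
      have hi := p.1.isLt
      have ht := p.2.isLt
      have e1 : U₂.eval l ^ ((p.1 : ℕ)) * U₂.eval l ^ (N - 1 - (p.1 : ℕ))
          = U₂.eval l ^ (N - 1) := by
        rw [← pow_add]
        congr 1
        omega
      have e2 : V₂.eval l ^ ((p.2 : ℕ)) * V₂.eval l ^ (N - 1 - (p.2 : ℕ))
          = V₂.eval l ^ (N - 1) := by
        rw [← pow_add]
        congr 1
        omega
      calc (q p * (m : ℂ) ^ (p.1 : ℕ) * δ ^ (n * (p.2 : ℕ)))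
            * (U₂.eval l ^ (N - 1) * V₂.eval l ^ (N - 1))
          = (q p * (m : ℂ) ^ (p.1 : ℕ) * δ ^ (n * (p.2 : ℕ)))
            * ((U₂.eval l ^ ((p.1 : ℕ)) * U₂.eval l ^ (N - 1 - (p.1 : ℕ)))
              * (V₂.eval l ^ ((p.2 : ℕ)) * V₂.eval l ^ (N - 1 - (p.2 : ℕ)))) := by
              rw [e1, e2]
        _ = q p * (U₁.eval l ^ (p.1 : ℕ) * U₂.eval l ^ (N - 1 - (p.1 : ℕ))
              * V₁.eval l ^ (p.2 : ℕ) * V₂.eval l ^ (N - 1 - (p.2 : ℕ))) := by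
              rw [show U₁.eval l ^ (p.1 : ℕ) = (m : ℂ) ^ (p.1 : ℕ) * U₂.eval l ^ (p.1 : ℕ) from by
                  rw [hu1, mul_pow],
                show V₁.eval l ^ (p.2 : ℕ) = (δ ^ n) ^ (p.2 : ℕ) * V₂.eval l ^ (p.2 : ℕ) from by
                  rw [hv1, mul_pow],
                ← pow_mul]
              ring
    rw [← Finset.sum_mul] at h6
    rcases mul_eq_zero.mp h6 with h7 | h7
    · exact h7
    · exact absurd h7 (mul_ne_zero (pow_ne_zero _ hu2) (pow_ne_zero _ hv2))
  -- projection to ℚ[X]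
  obtain ⟨p₀, hp₀⟩ := Function.ne_iff.mp hq0
  obtain ⟨pt, hpt0, hproj⟩ := proj_exists δ htr q p₀ hp₀
  set Δ : ℕ := Finset.sup Finset.univ (fun p : Fin N × Fin N => (pt p).natDegree) with hΔ
  -- choice of witnesses
  haveI : Infinite ↥S' := hS'.to_subtype
  have hx : ∀ x : ↥S', ∃ m n : ℕ, 1 ≤ m ∧ 1 ≤ n ∧
      A.eval x.1 = (x.1 + (m : ℂ) * β) * B.eval x.1 ∧
      Cp.eval x.1 * (γ * (∑ i ∈ range n, δ ^ i) * x.1 + δ ^ n) = x.1 * Dp.eval x.1 ∧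
      ∑ p : Fin N × Fin N, q p * (m : ℂ) ^ (p.1 : ℕ) * δ ^ (n * (p.2 : ℕ)) = 0 :=
    fun x => hrel x.1 x.2
  choose mf nf hm1 hn1 hE1 hE2 hR using hx
  -- fibers of mf and nf are finite
  have hfm : ∀ m : ℕ, {x : ↥S' | mf x = m}.Finite := by
    intro m
    rcases Set.eq_empty_or_nonempty {x : ↥S' | mf x = m} with he | ⟨x₀, hx₀⟩
    · rw [he]; exact Set.finite_empty
    · have hm' : 1 ≤ m := hx₀ ▸ hm1 x₀
      apply Set.Finite.of_finite_image _ (Set.injOn_of_injective Subtype.val_injective)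
      apply Set.Finite.subset (hfibm m hm')
      rintro l ⟨x, hx, rfl⟩
      have := hE1 x
      rw [hx] at this
      exact this
  have hfn : ∀ n : ℕ, {x : ↥S' | nf x = n}.Finite := by
    intro n
    rcases Set.eq_empty_or_nonempty {x : ↥S' | nf x = n} with he | ⟨x₀, hx₀⟩
    · rw [he]; exact Set.finite_empty
    · have hn' : 1 ≤ n := hx₀ ▸ hn1 x₀
      apply Set.Finite.of_finite_image _ (Set.injOn_of_injective Subtype.val_injective)
      apply Set.Finite.subset (hfibn n hn')
      rintro l ⟨x, hx, rfl⟩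
      have := hE2 x
      rw [hx] at this
      exact this
  -- the set of large-n witnesses
  set T : Set ↥S' := {x : ↥S' | Δ < nf x} with hT
  have hTinf : T.Infinite := by
    intro hTfin
    have hcover : (Set.univ : Set ↥S') ⊆ T ∪ ⋃ n ∈ Finset.range (Δ + 1), {x : ↥S' | nf x = n} := by
      intro x _
      by_cases hx : Δ < nf x
      · exact Or.inl hx
      · refine Or.inr ?_
        simp only [Set.mem_iUnion]
        exact ⟨nf x, Finset.mem_range.mpr (by omega), rfl⟩
    have hbig : (T ∪ ⋃ n ∈ Finset.range (Δ + 1), {x : ↥S' | nf x = n}).Finite :=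
      hTfin.union (Set.Finite.biUnion (Finset.range (Δ + 1)).finite_toSet (fun n _ => hfn n))
    exact Set.infinite_univ (hbig.subset hcover)
  set Mset : Set ℕ := mf '' T with hM
  have hMinf : Mset.Infinite := by
    intro hMfin
    have hcover : T ⊆ ⋃ m ∈ Mset, {x : ↥S' | mf x = m} := by
      intro x hx
      simp only [Set.mem_iUnion]
      exact ⟨mf x, ⟨x, hx, rfl⟩, rfl⟩
    exact hTinf ((hMfin.biUnion (fun m _ => hfm m)).subset hcover)
  -- for each m in Mset, rational polynomial relations
  have hEm : ∀ m ∈ Mset, ∀ t : Fin N,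
      (∑ i : Fin N, pt (i, t) * Polynomial.C ((m : ℚ) ^ (i : ℕ))) = 0 := by
    intro m hm' t
    obtain ⟨x, hxT, hxm⟩ := hm'
    have hrelx := hR x
    rw [hxm] at hrelx
    set c : Fin N × Fin N → Polynomial ℚ := fun p =>
      Polynomial.C ((m : ℚ) ^ (p.1 : ℕ)) * Polynomial.X ^ (nf x * (p.2 : ℕ)) with hc
    have hcrel : ∑ p : Fin N × Fin N, q p * Polynomial.aeval δ (c p) = 0 := by
      rw [← hrelx]
      apply Finset.sum_congr rfl
      intro p _
      rw [hc]
      simp only [map_mul, map_pow, Polynomial.aeval_C, Polynomial.aeval_X]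
      push_cast
      ring
    have hptrel := hproj c hcrel
    have hgrp : ∑ t' : Fin N,
        (∑ i : Fin N, pt (i, t') * Polynomial.C ((m : ℚ) ^ (i : ℕ)))
          * Polynomial.X ^ (nf x * (t' : ℕ)) = 0 := by
      rw [← hptrel, Fintype.sum_prod_type_right]
      apply Finset.sum_congr rfl
      intro t' _
      rw [Finset.sum_mul]
      apply Finset.sum_congr rfl
      intro i _
      rw [hc]
      ring
    have hdeg : ∀ t' : Fin N,
        (∑ i : Fin N, pt (i, t') * Polynomial.C ((m : ℚ) ^ (i : ℕ))).natDegree ≤ Δ := by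
      intro t'
      apply Polynomial.natDegree_sum_le_of_forall_le
      intro i _
      refine le_trans Polynomial.natDegree_mul_le ?_
      rw [Polynomial.natDegree_C, add_zero]
      exact Finset.le_sup (f := fun p : Fin N × Fin N => (pt p).natDegree) (Finset.mem_univ (i, t'))
    exact block_zero N Δ (nf x) hxT _ hdeg hgrp t
  -- conclude pt = 0
  have hptzero : ∀ p : Fin N × Fin N, pt p = 0 := by
    intro p
    obtain ⟨i₀, t⟩ := p
    ext d
    simp only [Polynomial.coeff_zero]
    set F : Polynomial ℚ := ∑ i : Fin N,
      Polynomial.C ((pt (i, t)).coeff d) * Polynomial.X ^ (i : ℕ) with hF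
    have hroots : ∀ m ∈ Mset, F.IsRoot (m : ℚ) := by
      intro m hm'
      have h8 := hEm m hm' t
      have h9 := congrArg (fun pol => Polynomial.coeff pol d) h8
      simp only [Polynomial.finset_sum_coeff, Polynomial.coeff_mul_C,
        Polynomial.coeff_zero] at h9
      show F.eval (m : ℚ) = 0
      rw [hF, Polynomial.eval_finset_sum]
      simp only [Polynomial.eval_mul, Polynomial.eval_C, Polynomial.eval_pow, Polynomial.eval_X]
      exact h9
    have hFinf : {y : ℚ | F.IsRoot y}.Infinite := by
      apply Set.Infinite.mono ?_ (hMinf.image (Set.injOn_of_injective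
        (fun a b h => Nat.cast_injective h)))
      rintro y ⟨m, hm', rfl⟩
      exact hroots m hm'
    have hF0 : F = 0 := Polynomial.eq_zero_of_infinite_isRoot F hFinf
    have h10 := congrArg (fun pol => Polynomial.coeff pol (i₀ : ℕ)) hF0
    simp only [hF, Polynomial.finset_sum_coeff, Polynomial.coeff_C_mul, Polynomial.coeff_X_pow,
      Polynomial.coeff_zero] at h10
    rw [Finset.sum_eq_single i₀] at h10
    · rwa [if_pos rfl, mul_one] at h10
    · intro i _ hne
      rw [if_neg (fun h => hne (Fin.ext h.symm)), mul_zero]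
    · intro h
      exact absurd (Finset.mem_univ i₀) h
  exact hpt0 (hptzero p₀)
end

section
/- Let α ∈ ℂ be nonzero and algebraic over ℚ, and let β, γ ∈ ℂ. Define f(x) = αx + β and g(x) = x + γ. Then f and g do not generate a free semigroup under composition: there exist two distinct nonempty finite words in the letters f and g whose composites are equal as functions ℂ → ℂ. -/
namespace Stmt9Aux

/-- encode a list of nonneg integers as a word: `g^{a₀} f g^{a₁} f ⋯ g^{a_d} f` -/
def word : List ℕ → List Bool
  | [] => []
  | a :: l => List.replicate a false ++ true :: word l

lemma rep_true_eq : ∀ {a a' : ℕ} {x y : List Bool},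
    List.replicate a false ++ true :: x = List.replicate a' false ++ true :: y →
    a = a' ∧ x = y := by
  intro a
  induction a with
  | zero =>
    intro a' x y h
    cases a' with
    | zero => simpa using h
    | succ n => simp [List.replicate_succ] at h
  | succ m ih =>
    intro a' x y h
    cases a' with
    | zero => simp [List.replicate_succ] at h
    | succ n =>
      simp only [List.replicate_succ, List.cons_append, List.cons.injEq] at h
      obtain ⟨hmn, hxy⟩ := ih h.2
      exact ⟨by omega, hxy⟩

lemma word_inj : ∀ {l1 l2 : List ℕ}, word l1 = word l2 → l1 = l2 := by
  intro l1
  induction l1 with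
  | nil =>
    intro l2 h
    cases l2 with
    | nil => rfl
    | cons a l =>
      exfalso
      cases a <;> simp [word, List.replicate_succ] at h
  | cons a l ih =>
    intro l2 h
    cases l2 with
    | nil =>
      exfalso
      cases a <;> simp [word, List.replicate_succ] at h
    | cons a' l' =>
      obtain ⟨h1, h2⟩ := rep_true_eq (by simpa [word] using h)
      rw [h1, ih h2]

variable (α β γ : ℂ)

def S : List ℕ → ℂ
  | [] => 0
  | a :: l => (a : ℂ) + α * S l

def C : List ℕ → ℂ
  | [] => 0
  | a :: l => (a : ℂ) * γ + α * C l + β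

def G : ℕ → ℂ
  | 0 => 0
  | n + 1 => α * G n + 1

lemma C_eq : ∀ l : List ℕ, C α β γ l = γ * S α l + β * G α l.length := by
  intro l
  induction l with
  | nil => simp [C, S, G]
  | cons a l ih => simp [C, S, G, ih]; ring

lemma foldr_comp_append (L1 L2 : List (ℂ → ℂ)) :
    (L1 ++ L2).foldr (· ∘ ·) id = L1.foldr (· ∘ ·) id ∘ L2.foldr (· ∘ ·) id := by
  induction L1 with
  | nil => rfl
  | cons a L ih => simp [ih, Function.comp_assoc]

lemma foldr_replicate_g (g : ℂ → ℂ) (hg : ∀ x, g x = x + γ) (a : ℕ) :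
    (List.replicate a g).foldr (· ∘ ·) id = fun x => x + a * γ := by
  induction a with
  | zero => funext x; simp
  | succ n ih =>
    funext x
    simp [List.replicate_succ, ih, hg]
    ring

lemma comp_word (f g : ℂ → ℂ) (hf : ∀ x, f x = α * x + β) (hg : ∀ x, g x = x + γ) :
    ∀ l : List ℕ,
    ((word l).map fun b => if b then f else g).foldr (· ∘ ·) id =
      fun x => α ^ l.length * x + C α β γ l := by
  intro l
  induction l with
  | nil => funext x; simp [word, C]
  | cons a l ih =>
    funext x
    simp only [word, List.map_append, List.map_cons, foldr_comp_append, List.foldr_cons,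
      if_pos, if_neg, List.map_replicate]
    simp only [Bool.false_eq_true, if_false, if_true]
    simp [foldr_replicate_g γ g hg, ih, hf, C, List.length_cons]
    ring

lemma S_append (l l' : List ℕ) : S α (l ++ l') = S α l + α ^ l.length * S α l' := by
  induction l with
  | nil => simp [S]
  | cons a l ih => simp [S, ih, pow_succ]; ring

lemma S_range_map (c : ℕ → ℕ) : ∀ n : ℕ,
    S α ((List.range n).map c) = ∑ i ∈ Finset.range n, (c i : ℂ) * α ^ i := by
  intro n
  induction n with
  | zero => simp [S]
  | succ n ih =>
    rw [List.range_succ, List.map_append, S_append, Finset.sum_range_succ, ih]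
    simp [S]
    ring

end Stmt9Aux

open Stmt9Aux in
/-- Proposition 2.12: when `α` is algebraic, `αx + β` and `x + γ` do not
generate a free semigroup under composition. -/
theorem stmt9 (α : ℂ) (hα : α ≠ 0) (halg : IsAlgebraic ℚ α) (β γ : ℂ)
    (f g : ℂ → ℂ)
    (hf : ∀ x, f x = α * x + β) (hg : ∀ x, g x = x + γ) :
    ∃ w₁ w₂ : List Bool, w₁ ≠ [] ∧ w₂ ≠ [] ∧ w₁ ≠ w₂ ∧
      (w₁.map fun b => if b then f else g).foldr (· ∘ ·) id =
      (w₂.map fun b => if b then f else g).foldr (· ∘ ·) id := by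
  by_cases hγ : γ = 0
  · refine ⟨[false], [false, false], by simp, by simp, by simp, ?_⟩
    funext x
    simp [hg, hγ]
  · -- get an integer polynomial
    obtain ⟨p, hp0, hpα⟩ := (IsFractionRing.isAlgebraic_iff ℤ ℚ ℂ).mpr halg
    obtain ⟨n, hn⟩ : ∃ n, n = p.natDegree + 1 := ⟨_, rfl⟩
    obtain ⟨cA, hcA⟩ : ∃ c : ℕ → ℕ, c = fun i => (p.coeff i).toNat := ⟨_, rfl⟩
    obtain ⟨cB, hcB⟩ : ∃ c : ℕ → ℕ, c = fun i => (-p.coeff i).toNat := ⟨_, rfl⟩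
    have hS : S α ((List.range n).map cA) = S α ((List.range n).map cB) := by
      rw [S_range_map, S_range_map, ← sub_eq_zero, ← Finset.sum_sub_distrib]
      have key : ∀ i, ((cA i : ℂ) * α ^ i - (cB i : ℂ) * α ^ i)
          = ((p.coeff i : ℤ) : ℂ) * α ^ i := by
        intro i
        have h1 : ((cA i : ℤ) : ℂ) - ((cB i : ℤ) : ℂ) = ((p.coeff i : ℤ) : ℂ) := by
          have : (cA i : ℤ) - (cB i : ℤ) = p.coeff i := by
            simp only [hcA, hcB]
            omega
          rw [← this]; push_cast; ring
        push_cast at h1 ⊢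
        rw [← h1]; ring
      rw [Finset.sum_congr rfl (fun i _ => key i)]
      have h2 := Polynomial.aeval_eq_sum_range (R := ℤ) (p := p) (α : ℂ)
      rw [hpα] at h2
      rw [hn]
      simp only [zsmul_eq_mul] at h2
      exact h2.symm
    have hlane : (List.range n).map cA ≠ (List.range n).map cB := by
      intro h
      apply hp0
      ext i
      by_cases hi : i < n
      · have h1 : ((List.range n).map cA)[i]'(by simpa using hi)
            = ((List.range n).map cB)[i]'(by simpa using hi) :=
          List.getElem_of_eq h _
        simp only [List.getElem_map, List.getElem_range] at h1
        rw [hcA, hcB] at h1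
        simp only at h1
        simp only [Polynomial.coeff_zero]
        omega
      · have : p.natDegree < i := by omega
        simp [Polynomial.coeff_eq_zero_of_natDegree_lt this]
    refine ⟨word ((List.range n).map cA), word ((List.range n).map cB), ?_, ?_,
      fun h => hlane (word_inj h), ?_⟩
    · intro h
      have h2 : (List.range n).map cA = [] := word_inj (by simpa [word] using h)
      rw [hn] at h2; simp [List.range_succ] at h2
    · intro h
      have h2 : (List.range n).map cB = [] := word_inj (by simpa [word] using h)
      rw [hn] at h2; simp [List.range_succ] at h2
    · rw [comp_word α β γ f g hf hg, comp_word α β γ f g hf hg, C_eq, C_eq, hS]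
      simp
end

section
/- Let k be a positive integer and ξ ∈ ℂ a primitive k-th root of unity. Let d₁, d₂ be integers with d₁ > 1 and d₂ > 1, let d₃, d₄ be integers with d₃ ≥ 0 and d₄ ≥ 0, and let a, b be integers with 0 ≤ a < k and 0 ≤ b < k. Then for every natural number n satisfying d₁^n > max(d₃, d₄) and d₂^n > max(d₃, d₄), there exists x₀ ∈ ℂ with x₀^(d₁^n − d₃) = ξ^a and x₀^(d₂^n − d₄) = ξ^b if and only if k · gcd(d₂^n − d₄, d₁^n − d₃) divides b·(d₁^n − d₃) − a·(d₂^n − d₄) in ℤ. -/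
lemma zpow_eq_zpow_of_dvd_sub {k : ℕ} {ξ : ℂ} (hξ : IsPrimitiveRoot ξ k)
    (hne : ξ ≠ 0) {m n : ℤ} (h : (k : ℤ) ∣ m - n) : ξ ^ m = ξ ^ n := by
  have h1 : ξ ^ (m - n) = 1 := (hξ.zpow_eq_one_iff_dvd _).mpr h
  calc ξ ^ m = ξ ^ (n + (m - n)) := by ring_nf
    _ = ξ ^ n * ξ ^ (m - n) := zpow_add₀ hne n (m - n)
    _ = ξ ^ n := by rw [h1, mul_one]

/-- Lemma 4.2: criterion for common solutions of two root-of-unity power equations. -/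
theorem stmt11 (k : ℕ) (hk : 0 < k) (ξ : ℂ) (hξ : IsPrimitiveRoot ξ k)
    (d₁ d₂ d₃ d₄ a b : ℤ) (hd₁ : 1 < d₁) (hd₂ : 1 < d₂)
    (hd₃ : 0 ≤ d₃) (hd₄ : 0 ≤ d₄)
    (ha : 0 ≤ a ∧ a < (k : ℤ)) (hb : 0 ≤ b ∧ b < (k : ℤ)) :
    ∀ n : ℕ, max d₃ d₄ < d₁ ^ n → max d₃ d₄ < d₂ ^ n →
      ((∃ x₀ : ℂ, x₀ ^ (d₁ ^ n - d₃) = ξ ^ a ∧ x₀ ^ (d₂ ^ n - d₄) = ξ ^ b) ↔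
        (k : ℤ) * (Int.gcd (d₂ ^ n - d₄) (d₁ ^ n - d₃) : ℤ) ∣
          b * (d₁ ^ n - d₃) - a * (d₂ ^ n - d₄)) := by
  intro n h1 h2
  set M : ℤ := d₁ ^ n - d₃ with hMdef
  set N : ℤ := d₂ ^ n - d₄ with hNdef
  have hM : 0 < M := by
    have := (max_lt_iff.mp h1).1; omega
  have hN : 0 < N := by
    have := (max_lt_iff.mp h2).1; omega
  have hξne : ξ ≠ 0 := hξ.ne_zero hk.ne'
  set g : ℤ := (Int.gcd N M : ℤ) with hgdef
  have hg : 0 < g := by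
    have : Int.gcd N M ≠ 0 := by
      simp [Int.gcd_eq_zero_iff]; omega
    positivity
  have hgM : g ∣ M := Int.gcd_dvd_right N M
  have hgN : g ∣ N := Int.gcd_dvd_left N M
  have hg' : 0 < Int.gcd N M := Nat.pos_of_ne_zero (by simp [Int.gcd_eq_zero_iff]; omega)
  set M' : ℤ := M / g with hM'def
  set N' : ℤ := N / g with hN'def
  have hM' : M = g * M' := (Int.mul_ediv_cancel' hgM).symm
  have hN' : N = g * N' := (Int.mul_ediv_cancel' hgN).symm
  have hcop : Int.gcd N' M' = 1 := Int.gcd_div_gcd_div_gcd hg'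
  constructor
  · rintro ⟨x₀, hx1, hx2⟩
    have hx₀ : x₀ ≠ 0 := by
      intro h0
      rw [h0, zero_zpow M hM.ne'] at hx1
      exact (zpow_ne_zero a hξne) hx1.symm
    have key : ξ ^ (a * N') = ξ ^ (b * M') := by
      have e1 : x₀ ^ (M * N') = ξ ^ (a * N') := by
        rw [zpow_mul x₀, hx1, ← zpow_mul ξ]
      have e2 : x₀ ^ (N * M') = ξ ^ (b * M') := by
        rw [zpow_mul x₀, hx2, ← zpow_mul ξ]
      have : M * N' = N * M' := by rw [hM', hN']; ring
      rw [← e1, ← e2, this]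
    have hdvd : (k : ℤ) ∣ a * N' - b * M' := by
      rw [← hξ.zpow_eq_one_iff_dvd]
      rw [zpow_sub₀ hξne, key, div_self (zpow_ne_zero _ hξne)]
    obtain ⟨w, hw⟩ := hdvd
    refine ⟨-w, ?_⟩
    linear_combination b * hM' - a * hN' - g * hw
  · rintro ⟨w, hw⟩
    have hkdvd : (k : ℤ) ∣ b * M' - a * N' := by
      refine ⟨w, ?_⟩
      have hexp : g * (b * M' - a * N') = g * ((k : ℤ) * w) := by
        linear_combination hw - b * hM' + a * hN'
      exact mul_left_cancel₀ hg.ne' hexp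
    set u : ℤ := Int.gcdA M' N' with hu
    set v : ℤ := Int.gcdB M' N' with hv
    have hbez : M' * u + N' * v = 1 := by
      have := Int.gcd_eq_gcd_ab M' N'
      rw [Int.gcd_comm] at hcop
      rw [hcop] at this
      exact_mod_cast this.symm
    obtain ⟨ρ, hρ⟩ := IsAlgClosed.exists_pow_nat_eq ξ (n := g.toNat)
      (by omega)
    have hρg : ρ ^ g = ξ := by
      rw [← hρ, ← zpow_natCast, Int.toNat_of_nonneg hg.le]
    have hρne : ρ ≠ 0 := by
      intro h0
      rw [h0, zero_zpow g hg.ne'] at hρg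
      exact hξne hρg.symm
    refine ⟨ρ ^ (u * a + v * b), ?_, ?_⟩
    · rw [← zpow_mul ρ]
      have e : (u * a + v * b) * M = g * ((u * a + v * b) * M') := by
        rw [hM']; ring
      rw [e, zpow_mul ρ, hρg]
      apply zpow_eq_zpow_of_dvd_sub hξ hξne
      have : (u * a + v * b) * M' - a = v * (b * M' - a * N') := by
        linear_combination a * hbez
      rw [this]
      exact Dvd.dvd.mul_left hkdvd v
    · rw [← zpow_mul ρ]
      have e : (u * a + v * b) * N = g * ((u * a + v * b) * N') := by
        rw [hN']; ring
      rw [e, zpow_mul ρ, hρg]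
      apply zpow_eq_zpow_of_dvd_sub hξ hξne
      have : (u * a + v * b) * N' - b = -u * (b * M' - a * N') := by
        linear_combination b * hbez
      rw [this]
      exact Dvd.dvd.mul_left hkdvd (-u)
end

section
/- Let a, b, c₁, c₂, d₃ be non-negative integers, let m be a positive integer and ξ ∈ ℂ a primitive m-th root of unity, and let d₁, d₂ be integers with d₁ > 1 and d₂ > 1. Define φ, ψ : ℂ → ℂ by φ(y) = ξ^a · y^(d₁) and ψ(y) = ξ^b · y^(d₂). Then the set { n ∈ ℕ : n ≥ 1 and there exists x ∈ ℂ with x ≠ 0 such that φ^n(x) = ξ^(c₁) · x^(d₃) and ψ^n(x) = ξ^(c₂) · x^(d₃) } is a finite union of arithmetic progressions. -/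
/-- A set of naturals is eventually periodic. -/
def EvPer (S : Set ℕ) : Prop := ∃ T N : ℕ, 0 < T ∧ ∀ n, N ≤ n → (n ∈ S ↔ n + T ∈ S)

namespace EvPer

theorem congr_above {S S' : Set ℕ} (N : ℕ) (h : ∀ n, N ≤ n → (n ∈ S ↔ n ∈ S'))
    (h' : EvPer S') : EvPer S := by
  obtain ⟨T, N', hT, hP⟩ := h'
  refine ⟨T, max N N', hT, fun n hn => ?_⟩
  have h1 : N ≤ n := le_trans (le_max_left _ _) hn
  have h2 : N' ≤ n := le_trans (le_max_right _ _) hn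
  rw [h n h1, h (n + T) (le_trans h1 (Nat.le_add_right _ _)), hP n h2]

theorem mul_period {S : Set ℕ} {T N : ℕ} (hP : ∀ n, N ≤ n → (n ∈ S ↔ n + T ∈ S)) :
    ∀ k n, N ≤ n → (n ∈ S ↔ n + k * T ∈ S) := by
  intro k
  induction k with
  | zero => simp
  | succ k ih =>
    intro n hn
    rw [ih n hn, Nat.succ_mul, ← add_assoc]
    exact hP (n + k * T) (le_trans hn (Nat.le_add_right _ _))

theorem union {S S' : Set ℕ} (h : EvPer S) (h' : EvPer S') : EvPer (S ∪ S') := by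
  obtain ⟨T, N, hT, hP⟩ := h
  obtain ⟨T', N', hT', hP'⟩ := h'
  refine ⟨T * T', max N N', Nat.mul_pos hT hT', fun n hn => ?_⟩
  have h1 := mul_period hP T' n (le_trans (le_max_left _ _) hn)
  have h2 := mul_period hP' T n (le_trans (le_max_right _ _) hn)
  rw [mul_comm T' T] at h1
  simp only [Set.mem_union]
  rw [h1, h2]

theorem inter {S S' : Set ℕ} (h : EvPer S) (h' : EvPer S') : EvPer (S ∩ S') := by
  obtain ⟨T, N, hT, hP⟩ := h
  obtain ⟨T', N', hT', hP'⟩ := h'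
  refine ⟨T * T', max N N', Nat.mul_pos hT hT', fun n hn => ?_⟩
  have h1 := mul_period hP T' n (le_trans (le_max_left _ _) hn)
  have h2 := mul_period hP' T n (le_trans (le_max_right _ _) hn)
  rw [mul_comm T' T] at h1
  simp only [Set.mem_inter_iff]
  rw [h1, h2]

theorem of_const {S : Set ℕ} (N : ℕ) (C : Prop) (h : ∀ n, N ≤ n → (n ∈ S ↔ C)) : EvPer S :=
  ⟨1, N, Nat.one_pos, fun n hn => by
    rw [h n hn, h (n + 1) (le_trans hn (Nat.le_add_right _ _))]⟩

theorem biInter {ι : Type*} (s : Finset ι) (f : ι → Set ℕ) (h : ∀ i ∈ s, EvPer (f i)) :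
    EvPer (⋂ i ∈ s, f i) := by
  classical
  induction s using Finset.induction with
  | empty => simp; exact of_const 0 True (by simp)
  | insert _ _ hx ih =>
    rename_i x s
    simp only [Finset.mem_insert] at h
    rw [Finset.set_biInter_insert]
    exact inter (h x (Or.inl rfl)) (ih fun i hi => h i (Or.inr hi))

/-- Eventually periodic sets are finite unions of arithmetic progressions. -/
theorem finite_union_AP {S : Set ℕ} (h : EvPer S) :
    ∃ s : Finset (ℕ × ℕ), S = ⋃ p ∈ s, {n : ℕ | ∃ k : ℕ, n = p.1 + p.2 * k} := by
  classical
  obtain ⟨T, N, hT, hP⟩ := h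
  refine ⟨((Finset.range N).filter (fun n => n ∈ S)).image (fun n => (n, 0)) ∪
    ((Finset.Ico N (N + T)).filter (fun n => n ∈ S)).image (fun n => (n, T)), ?_⟩
  ext n
  simp only [Set.mem_iUnion, Finset.mem_union, Finset.mem_image, Finset.mem_filter,
    Finset.mem_range, Finset.mem_Ico, Set.mem_setOf_eq]
  constructor
  · intro hn
    by_cases hlt : n < N
    · exact ⟨(n, 0), Or.inl ⟨n, ⟨hlt, hn⟩, rfl⟩, 0, by simp⟩
    · push_neg at hlt
      obtain ⟨k, n₀, hmod, hge, hlt2⟩ : ∃ k n₀, n = n₀ + T * k ∧ N ≤ n₀ ∧ n₀ < N + T :=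
        ⟨(n - N) / T, N + (n - N) % T, by have := Nat.div_add_mod (n - N) T; omega,
          by omega, by have := Nat.mod_lt (n - N) hT; omega⟩
      have hn₀mem : n₀ ∈ S := by
        have : ∀ j, n₀ + T * j ∈ S → n₀ ∈ S := by
          intro j
          induction j with
          | zero => simp
          | succ j ih =>
            intro hj
            apply ih
            have h1 := mul_period hP 1 (n₀ + T * j) (by omega)
            simp only [one_mul] at h1
            rw [h1]
            have h2 : n₀ + T * j + T = n₀ + T * (j + 1) := by ring
            rw [h2]
            exact hj
        exact this k (by rw [← hmod]; exact hn)
      refine ⟨(n₀, T), Or.inr ⟨n₀, ⟨⟨hge, hlt2⟩, hn₀mem⟩, rfl⟩, k, ?_⟩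
      simp only
      omega
  · rintro ⟨⟨A, D⟩, hp, k, rfl⟩
    rcases hp with ⟨x, ⟨hx, hxS⟩, hxx⟩ | ⟨x, ⟨hx, hxS⟩, hxx⟩
    · obtain ⟨rfl, rfl⟩ := Prod.mk.inj hxx
      simpa using hxS
    · obtain ⟨rfl, rfl⟩ := Prod.mk.inj hxx
      simp only
      rw [mul_comm]
      exact (mul_period hP k x hx.1).mp hxS

end EvPer
section Part2

/-- Integer divisibility via `ZMod`. -/
theorem intdvd_iff_zmod (M : ℕ) [NeZero M] (z : ℤ) : (M:ℤ) ∣ z ↔ ((z : ZMod M) = 0) :=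
  (ZMod.intCast_zmod_eq_zero_iff_dvd z M).symm

/-- Eventual periodicity of powers modulo M. -/
theorem per_pow (M : ℕ) (hM : 0 < M) (d : ℕ) :
    ∃ T N : ℕ, 0 < T ∧ ∀ n, N ≤ n → (M:ℤ) ∣ (d:ℤ)^(n+T) - (d:ℤ)^n := by
  haveI : NeZero M := ⟨hM.ne'⟩
  have hmap : ∀ x ∈ Finset.range (Fintype.card (ZMod M) + 1),
      ((d : ZMod M)^x) ∈ (Finset.univ : Finset (ZMod M)) := fun x _ => Finset.mem_univ _
  obtain ⟨i, hi, j, hj, hne, heq⟩ :=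
    Finset.exists_ne_map_eq_of_card_lt_of_maps_to
      (by simp [Finset.card_range]) hmap
  wlog hij : i < j generalizing i j
  · exact this j hj i hi (Ne.symm hne) heq.symm (by omega)
  refine ⟨j - i, i, by omega, fun n hn => ?_⟩
  rw [intdvd_iff_zmod]
  push_cast
  have key : (d : ZMod M)^(n + (j - i)) = (d : ZMod M)^n := by
    have h1 : n + (j - i) = j + (n - i) := by omega
    have h2 : n = i + (n - i) := by omega
    rw [h1, pow_add, ← heq, ← pow_add, ← h2]
  rw [key, sub_self]

/-- Extend a period to its multiples. -/
theorem per_pow_mul {M : ℕ} {d : ℕ} {T N : ℕ}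
    (h : ∀ n, N ≤ n → (M:ℤ) ∣ (d:ℤ)^(n+T) - (d:ℤ)^n) :
    ∀ k n, N ≤ n → (M:ℤ) ∣ (d:ℤ)^(n+k*T) - (d:ℤ)^n := by
  intro k
  induction k with
  | zero => simp
  | succ k ih =>
    intro n hn
    have h1 := ih n hn
    have h2 := h (n + k * T) (le_trans hn (Nat.le_add_right _ _))
    have : n + (k+1) * T = n + k * T + T := by ring
    rw [this]
    have := dvd_add h2 h1
    simpa using this

/-- Multiplicative order modulo M. -/
theorem ord_exists (M : ℕ) (hM : 0 < M) (d : ℕ) (h : Nat.Coprime d M) :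
    ∃ ρ : ℕ, 0 < ρ ∧ (M:ℤ) ∣ (d:ℤ)^ρ - 1 ∧ ∀ s : ℕ, (M:ℤ) ∣ (d:ℤ)^s - 1 → ρ ∣ s := by
  haveI : NeZero M := ⟨hM.ne'⟩
  set u := ZMod.unitOfCoprime d h with hu
  have hcoe : (u : ZMod M) = (d : ZMod M) := ZMod.coe_unitOfCoprime d h
  refine ⟨orderOf u, orderOf_pos u, ?_, ?_⟩
  · rw [intdvd_iff_zmod]
    push_cast
    have : (d : ZMod M)^(orderOf u) = 1 := by
      rw [← hcoe, ← Units.val_pow_eq_pow_val, pow_orderOf_eq_one u, Units.val_one]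
    rw [this, sub_self]
  · intro s hs
    rw [intdvd_iff_zmod] at hs
    push_cast at hs
    have hd : (d : ZMod M)^s = 1 := by
      have := sub_eq_zero.mp hs
      exact_mod_cast this
    apply orderOf_dvd_of_pow_eq_one
    ext
    push_cast [hcoe]
    exact hd

end Part2
section Part3

variable {p : ℕ}

/-- `p^k ∣ z ↔ k ≤ v_p z` for nonzero `z`. -/
theorem val_dvd_iff (hp : p.Prime) (z : ℤ) (hz : z ≠ 0) (k : ℕ) :
    (p:ℤ)^k ∣ z ↔ k ≤ padicValInt p z := by
  haveI := Fact.mk hp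
  rw [padicValInt_dvd_iff]
  simp [hz]

theorem val_pow_dvd (hp : p.Prime) (z : ℤ) : (p:ℤ)^(padicValInt p z) ∣ z := by
  haveI := Fact.mk hp
  exact padicValInt_dvd z

/-- Decompose a nonzero integer into prime power times unit part. -/
theorem val_decomp (hp : p.Prime) (z : ℤ) (hz : z ≠ 0) :
    ∃ u : ℤ, z = (p:ℤ)^(padicValInt p z) * u ∧ ¬ ((p:ℤ) ∣ u) := by
  obtain ⟨u, hu⟩ := val_pow_dvd hp z
  refine ⟨u, hu, fun hdvd => ?_⟩
  obtain ⟨w, hw⟩ := hdvd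
  have : (p:ℤ)^(padicValInt p z + 1) ∣ z := by
    refine ⟨w, ?_⟩
    conv_lhs => rw [hu, hw]
    ring
  rw [val_dvd_iff hp z hz] at this
  omega

theorem val_eq_of (hp : p.Prime) (z : ℤ) (k : ℕ) (u : ℤ) (hzu : z = (p:ℤ)^k * u) (hu : ¬ ((p:ℤ) ∣ u)) :
    padicValInt p z = k := by
  have hpz : Prime (p:ℤ) := Nat.prime_iff_prime_int.mp hp
  have hu0 : u ≠ 0 := fun h => hu (h ▸ dvd_zero _)
  have hz : z ≠ 0 := by
    rw [hzu]
    exact mul_ne_zero (pow_ne_zero _ (by exact_mod_cast hp.ne_zero)) hu0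
  have h1 : k ≤ padicValInt p z := (val_dvd_iff hp z hz k).mp ⟨u, hzu⟩
  have h2 : ¬ ((p:ℤ)^(k+1) ∣ z) := by
    intro hd
    obtain ⟨w, hw⟩ := hd
    apply hu
    have hcan : (p:ℤ)^k * u = (p:ℤ)^k * ((p:ℤ) * w) := by rw [← hzu, hw]; ring
    have := mul_left_cancel₀ (pow_ne_zero k (by exact_mod_cast hp.ne_zero : (p:ℤ) ≠ 0)) hcan
    exact ⟨w, this⟩
  rw [val_dvd_iff hp z hz] at h2
  omega

/-- If `¬ p ∣ d` then `p^K ∣ d^n * y → p^K ∣ y`. -/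
theorem cancel_unit_pow (hp : p.Prime) {d : ℤ} (hd : ¬ ((p:ℤ) ∣ d)) {K n : ℕ} {y : ℤ}
    (h : (p:ℤ)^K ∣ d^n * y) : (p:ℤ)^K ∣ y := by
  have hpz : Prime (p:ℤ) := Nat.prime_iff_prime_int.mp hp
  have hco : IsCoprime ((p:ℤ)^K) (d^n) := (((hpz.coprime_iff_not_dvd).mpr hd).pow : _)
  exact hco.dvd_of_dvd_mul_left h

theorem nat_val_decomp (hp : p.Prime) (n : ℕ) (hn : n ≠ 0) :
    ∃ n' : ℕ, n = p^(padicValNat p n) * n' ∧ ¬ (p ∣ n') := by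
  haveI := Fact.mk hp
  refine ⟨ordCompl[p] n, ?_, ?_⟩
  · rw [← Nat.factorization_def n hp]
    exact (Nat.ordProj_mul_ordCompl_eq_self n p).symm
  · exact Nat.not_dvd_ordCompl hp hn

theorem two_pow_le (k : ℕ) (hk : 1 ≤ k) : k ≤ 2^(k-1) := by
  induction k with
  | zero => omega
  | succ k ih =>
    rcases Nat.eq_or_lt_of_le hk with h | h
    · simp [← h]
    · have hk1 : 1 ≤ k := by omega
      have := ih hk1
      have h2 : 2^(k+1-1) = 2 * 2^(k-1) := by
        rw [← pow_succ']
        congr 1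
        omega
      omega

/-- valuation of k is at most k - 1 -/
theorem val_le_self (hp : p.Prime) (k : ℕ) (hk : 2 ≤ k) : padicValNat p k ≤ k - 1 := by
  haveI := Fact.mk hp
  have h1 : p^(padicValNat p k) ∣ k := pow_padicValNat_dvd
  have h2 : p^(padicValNat p k) ≤ k := Nat.le_of_dvd (by omega) h1
  have h3 : 2^(padicValNat p k) ≤ p^(padicValNat p k) :=
    Nat.pow_le_pow_left hp.two_le _
  have h4 : k ≤ 2^(k-1) := two_pow_le k (by omega)
  have : 2^(padicValNat p k) ≤ 2^(k-1) := by omega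
  exact (Nat.pow_le_pow_iff_right (by omega)).mp this

/-- `v_p (C t k) ≥ v_p t - v_p k` for `1 ≤ k ≤ t`. -/
theorem choose_val (hp : p.Prime) (t k : ℕ) (hk : 1 ≤ k) (hkt : k ≤ t) :
    p^(padicValNat p t - padicValNat p k) ∣ Nat.choose t k := by
  haveI := Fact.mk hp
  set vt := padicValNat p t
  set vk := padicValNat p k
  rcases le_or_gt vt vk with h | h
  · simp [Nat.sub_eq_zero_of_le h]
  -- key identity : t * C (t-1) (k-1) = C t k * k
  have hident : t * Nat.choose (t-1) (k-1) = Nat.choose t k * k := by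
    have h0 := Nat.add_one_mul_choose_eq (t-1) (k-1)
    have ht1 : t - 1 + 1 = t := by omega
    have hk1 : k - 1 + 1 = k := by omega
    rw [ht1, hk1] at h0
    exact h0
  have hdvd : p^vt ∣ Nat.choose t k * k := by
    rw [← hident]
    exact Dvd.dvd.mul_right pow_padicValNat_dvd _
  obtain ⟨k', hk', hk'nd⟩ := nat_val_decomp hp k (by omega)
  have hdvd1 : p^(vt - vk) * p^vk ∣ (Nat.choose t k * k') * p^vk := by
    have hex : p^(vt-vk) * p^vk = p^vt := by rw [← pow_add]; congr 1; omega
    have harr : (Nat.choose t k * k') * p^vk = Nat.choose t k * k := by rw [hk']; ring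
    rw [hex, harr]
    exact hdvd
  have hdvd2 : p^(vt - vk) ∣ Nat.choose t k * k' :=
    (Nat.mul_dvd_mul_iff_right (Nat.pow_pos hp.pos)).mp hdvd1
  have hco : Nat.Coprime (p^(vt-vk)) k' :=
    Nat.Coprime.pow_left _ ((Nat.Prime.coprime_iff_not_dvd hp).mpr hk'nd)
  exact (Nat.Coprime.dvd_of_dvd_mul_right hco hdvd2)

/-- Binomial approximation: `(1+x)^t ≡ 1 + t x` to high precision. -/
theorem bin_approx (hp : p.Prime) (L : ℕ) (hL : 2 ≤ L) (x : ℤ) (hx : (p:ℤ)^L ∣ x) (t : ℕ) :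
    (p:ℤ)^(2*L - 1 + padicValNat p t) ∣ (1+x)^t - 1 - t*x := by
  haveI := Fact.mk hp
  rcases Nat.eq_zero_or_pos t with rfl | ht
  · simp
  have hsum : (1+x)^t - 1 - t*x = ∑ k ∈ Finset.Ico 2 (t+1), x^k * Nat.choose t k := by
    have := add_pow x 1 t
    simp only [one_pow, mul_one] at this
    have hsplit : ∑ k ∈ Finset.range (t+1), x^k * (Nat.choose t k : ℤ) =
        (∑ k ∈ Finset.range 2, x^k * (Nat.choose t k : ℤ)) +
        ∑ k ∈ Finset.Ico 2 (t+1), x^k * (Nat.choose t k : ℤ) := by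
      rw [Finset.range_eq_Ico,
        ← Finset.sum_Ico_consecutive _ (by omega : 0 ≤ 2) (by omega : 2 ≤ t+1),
        ← Finset.range_eq_Ico]
    have h2 : ∑ k ∈ Finset.range 2, x^k * (Nat.choose t k : ℤ) = 1 + t*x := by
      rw [Finset.sum_range_succ, Finset.sum_range_one]
      simp only [pow_zero, Nat.choose_zero_right, Nat.cast_one, mul_one, pow_one,
        Nat.choose_one_right]
      ring
    have hcomm : (1+x)^t = (x+1)^t := by ring_nf
    rw [hcomm, this, hsplit, h2]
    ring
  rw [hsum]
  apply Finset.dvd_sum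
  intro k hk
  simp only [Finset.mem_Ico] at hk
  obtain ⟨hk2, hkt⟩ := hk
  set vt := padicValNat p t
  set vk := padicValNat p k
  have hvk : vk ≤ k - 1 := val_le_self hp k hk2
  have hc : (p:ℤ)^(vt - vk) ∣ (Nat.choose t k : ℤ) := by
    exact_mod_cast Int.natCast_dvd_natCast.mpr (choose_val hp t k (by omega) (by omega))
  have hxk : (p:ℤ)^(k*L) ∣ x^k := by
    have := pow_dvd_pow_of_dvd hx k
    rwa [← pow_mul, mul_comm L k] at this
  have hprod : (p:ℤ)^(k*L + (vt - vk)) ∣ x^k * (Nat.choose t k : ℤ) := by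
    rw [pow_add]
    exact mul_dvd_mul hxk hc
  apply dvd_trans _ hprod
  apply pow_dvd_pow
  -- 2L - 1 + vt ≤ k L + (vt - vk), knowing vk ≤ k-1, k ≥ 2, L ≥ 2
  have h5 : (k-2)*2 ≤ (k-2)*L := Nat.mul_le_mul_left _ hL
  have hineq : vk + 1 ≤ (k - 2)*L + 2 := by omega
  have hkL : k * L = (k-2)*L + 2*L := by
    have : k * L = (k - 2 + 2) * L := by congr 1; omega
    rw [this]; ring
  omega
end Part3
section Part4a

variable {p : ℕ}

theorem val_of_nat (n : ℕ) : padicValInt p (n:ℤ) = padicValNat p n :=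
  padicValInt.of_nat

theorem cancel_unit (hp : p.Prime) {u : ℤ} (hu : ¬ ((p:ℤ) ∣ u)) {K : ℕ} {y : ℤ}
    (h : (p:ℤ)^K ∣ u * y) : (p:ℤ)^K ∣ y := by
  have hpz : Prime (p:ℤ) := Nat.prime_iff_prime_int.mp hp
  have hco : IsCoprime ((p:ℤ)^K) u := (((hpz.coprime_iff_not_dvd).mpr hu).pow_left : _)
  exact hco.dvd_of_dvd_mul_left h

theorem not_dvd_pow_of_not_dvd (hp : p.Prime) {d : ℤ} (hd : ¬ ((p:ℤ) ∣ d)) (n : ℕ) :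
    ¬ ((p:ℤ) ∣ d^n) := by
  intro h
  exact hd ((Nat.prime_iff_prime_int.mp hp).dvd_of_dvd_pow h)

/-- Cancel an exact power: `p^(a+b) ∣ p^a * y ↔ p^b ∣ y`. -/
theorem cancel_exact_pow (hp : p.Prime) (a b : ℕ) (y : ℤ) :
    (p:ℤ)^(a+b) ∣ (p:ℤ)^a * y ↔ (p:ℤ)^b ∣ y := by
  rw [pow_add]
  exact mul_dvd_mul_iff_left (pow_ne_zero a (by exact_mod_cast hp.ne_zero : (p:ℤ) ≠ 0))

/-- If `v_p x = k` exactly and `p^(k+1) ∣ y`, then `v_p (x+y) = k`. -/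
theorem val_add_eq (hp : p.Prime) {x y : ℤ} {k : ℕ} (hx : x ≠ 0)
    (hvx : padicValInt p x = k) (hy : (p:ℤ)^(k+1) ∣ y) :
    padicValInt p (x + y) = k := by
  obtain ⟨u, hu, hund⟩ := val_decomp hp x hx
  rw [hvx] at hu
  obtain ⟨w, hw⟩ := hy
  apply val_eq_of hp (x+y) k (u + (p:ℤ)*w)
  · rw [hu, hw]; ring
  · intro hdvd
    apply hund
    have : (p:ℤ) ∣ u + (p:ℤ)*w - (p:ℤ)*w := dvd_sub hdvd ⟨w, rfl⟩
    simpa using this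

theorem val_sub_eq (hp : p.Prime) {x y : ℤ} {k : ℕ} (hx : x ≠ 0)
    (hvx : padicValInt p x = k) (hy : (p:ℤ)^(k+1) ∣ y) :
    padicValInt p (y - x) = k := by
  have h1 : y - x = -x + y := by ring
  rw [h1]
  apply val_add_eq hp (neg_ne_zero.mpr hx) _ hy
  rw [padicValInt, Int.natAbs_neg]
  exact hvx

/-- Valuation of products when both factors are nonzero. -/
theorem val_mul (hp : p.Prime) {x y : ℤ} (hx : x ≠ 0) (hy : y ≠ 0) :
    padicValInt p (x*y) = padicValInt p x + padicValInt p y := by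
  haveI := Fact.mk hp
  exact padicValInt.mul hx hy

theorem val_pow_base (hp : p.Prime) {d : ℤ} (hd : ¬ ((p:ℤ) ∣ d)) (n : ℕ) :
    padicValInt p (d^n) = 0 :=
  val_eq_of hp _ 0 (d^n) (by ring) (not_dvd_pow_of_not_dvd hp hd n)

theorem val_mul_unit (hp : p.Prime) {u y : ℤ} (hu : ¬ ((p:ℤ) ∣ u)) {k : ℕ}
    (hy : padicValInt p y = k) (hy0 : y ≠ 0) : padicValInt p (u * y) = k := by
  obtain ⟨w, hw, hwnd⟩ := val_decomp hp y hy0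
  rw [hy] at hw
  apply val_eq_of hp _ k (u*w)
  · rw [hw]; ring
  · intro h
    rcases (Nat.prime_iff_prime_int.mp hp).dvd_mul.mp h with h' | h'
    exacts [hu h', hwnd h']

/-- exact valuation of a natural-cast times power: `v_p (t * x) ` etc. -/
theorem val_nat_mul (hp : p.Prime) (t : ℕ) (ht : t ≠ 0) {x : ℤ} (hx : x ≠ 0) :
    padicValInt p ((t:ℤ) * x) = padicValNat p t + padicValInt p x := by
  rw [val_mul hp (by exact_mod_cast ht) hx, val_of_nat]

theorem D_pos {d : ℕ} (hd : 2 ≤ d) (d₃ : ℕ) {n : ℕ} (hn : d₃ < n) :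
    (d₃:ℤ) < (d:ℤ)^n := by
  have h1 : (n:ℤ) < 2^n := by exact_mod_cast Nat.lt_two_pow_self
  have h2 : (2:ℤ)^n ≤ (d:ℤ)^n := by
    apply pow_le_pow_left₀ (by norm_num)
    exact_mod_cast hd
  have : (d₃:ℤ) < (n:ℤ) := by exact_mod_cast hn
  omega

end Part4a
section Part4b

/-- The sequence `d^n - d₃`. -/
def Dseq (d d₃ : ℕ) (n : ℕ) : ℤ := (d:ℤ)^n - (d₃:ℤ)

/-- The combination `A·D₂ + B·D₁ + C·D₁·D₂`. -/
def Fseq (A B C : ℤ) (d₁ d₂ d₃ : ℕ) (n : ℕ) : ℤ :=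
  A * Dseq d₂ d₃ n + B * Dseq d₁ d₃ n + C * (Dseq d₁ d₃ n * Dseq d₂ d₃ n)

theorem Dseq_pos {d : ℕ} (hd : 2 ≤ d) (d₃ : ℕ) {n : ℕ} (hn : d₃ < n) :
    0 < Dseq d d₃ n := by
  have := D_pos hd d₃ hn
  simp only [Dseq]
  omega

theorem Dseq_ne {d : ℕ} (hd : 2 ≤ d) (d₃ : ℕ) {n : ℕ} (hn : d₃ < n) :
    Dseq d d₃ n ≠ 0 := (Dseq_pos hd d₃ hn).ne'

theorem Dseq_diff (d d₃ n s : ℕ) :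
    Dseq d d₃ (n+s) - Dseq d d₃ n = (d:ℤ)^n * ((d:ℤ)^s - 1) := by
  simp only [Dseq, pow_add]
  ring

theorem Fseq_diff_dvd (M : ℤ) (A B C : ℤ) (d₁ d₂ d₃ : ℕ) (n T : ℕ)
    (h1 : M ∣ (d₁:ℤ)^(n+T) - (d₁:ℤ)^n) (h2 : M ∣ (d₂:ℤ)^(n+T) - (d₂:ℤ)^n) :
    M ∣ Fseq A B C d₁ d₂ d₃ (n+T) - Fseq A B C d₁ d₂ d₃ n := by
  obtain ⟨u, hu⟩ := h1
  obtain ⟨v, hv⟩ := h2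
  have e1 : (d₁:ℤ)^(n+T) = (d₁:ℤ)^n + M*u := by linarith
  have e2 : (d₂:ℤ)^(n+T) = (d₂:ℤ)^n + M*v := by linarith
  refine ⟨A*v + B*u + C*(u * Dseq d₂ d₃ n + Dseq d₁ d₃ (n+T) * v), ?_⟩
  simp only [Fseq, Dseq]
  rw [e1, e2]
  ring

theorem Dseq_diff_dvd (M : ℤ) (d d₃ : ℕ) (n T : ℕ)
    (h1 : M ∣ (d:ℤ)^(n+T) - (d:ℤ)^n) :
    M ∣ Dseq d d₃ (n+T) - Dseq d d₃ n := by
  simp only [Dseq]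
  simpa using h1

/-- simultaneous eventual periodicity for four bases -/
theorem per_pow4 (M : ℕ) (hM : 0 < M) (b₁ b₂ b₃ b₄ : ℕ) :
    ∃ T N : ℕ, 0 < T ∧ ∀ n, N ≤ n →
      ((M:ℤ) ∣ (b₁:ℤ)^(n+T) - (b₁:ℤ)^n) ∧ ((M:ℤ) ∣ (b₂:ℤ)^(n+T) - (b₂:ℤ)^n) ∧
      ((M:ℤ) ∣ (b₃:ℤ)^(n+T) - (b₃:ℤ)^n) ∧ ((M:ℤ) ∣ (b₄:ℤ)^(n+T) - (b₄:ℤ)^n) := by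
  obtain ⟨T₁, N₁, hT₁, h₁⟩ := per_pow M hM b₁
  obtain ⟨T₂, N₂, hT₂, h₂⟩ := per_pow M hM b₂
  obtain ⟨T₃, N₃, hT₃, h₃⟩ := per_pow M hM b₃
  obtain ⟨T₄, N₄, hT₄, h₄⟩ := per_pow M hM b₄
  refine ⟨T₁*T₂*T₃*T₄, N₁+N₂+N₃+N₄, by positivity, fun n hn => ?_⟩
  refine ⟨?_, ?_, ?_, ?_⟩
  · have := per_pow_mul h₁ (T₂*T₃*T₄) n (by omega)
    rwa [show T₂*T₃*T₄*T₁ = T₁*T₂*T₃*T₄ by ring] at this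
  · have := per_pow_mul h₂ (T₁*T₃*T₄) n (by omega)
    rwa [show T₁*T₃*T₄*T₂ = T₁*T₂*T₃*T₄ by ring] at this
  · have := per_pow_mul h₃ (T₁*T₂*T₄) n (by omega)
    rwa [show T₁*T₂*T₄*T₃ = T₁*T₂*T₃*T₄ by ring] at this
  · have := per_pow_mul h₄ (T₁*T₂*T₃) n (by omega)
    rwa [show T₁*T₂*T₃*T₄ = T₁*T₂*T₃*T₄ by ring] at this

/-- Sets defined by divisibility of a 4-term exponential linear combination
are eventually periodic, as are their complements. -/
theorem per_lin4 (M : ℕ) (hM : 0 < M) (q0 q1 q2 q3 q4 : ℤ) (b₁ b₂ b₃ b₄ : ℕ) :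
    EvPer {n : ℕ | (M:ℤ) ∣ q0 + q1*(b₁:ℤ)^n + q2*(b₂:ℤ)^n + q3*(b₃:ℤ)^n + q4*(b₄:ℤ)^n} ∧
    EvPer {n : ℕ | ¬ ((M:ℤ) ∣ q0 + q1*(b₁:ℤ)^n + q2*(b₂:ℤ)^n + q3*(b₃:ℤ)^n + q4*(b₄:ℤ)^n)} := by
  obtain ⟨T, N, hT, h⟩ := per_pow4 M hM b₁ b₂ b₃ b₄
  have key : ∀ n, N ≤ n →
      (((M:ℤ) ∣ q0 + q1*(b₁:ℤ)^n + q2*(b₂:ℤ)^n + q3*(b₃:ℤ)^n + q4*(b₄:ℤ)^n) ↔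
       ((M:ℤ) ∣ q0 + q1*(b₁:ℤ)^(n+T) + q2*(b₂:ℤ)^(n+T) + q3*(b₃:ℤ)^(n+T) + q4*(b₄:ℤ)^(n+T))) := by
    intro n hn
    obtain ⟨c1, c2, c3, c4⟩ := h n hn
    have hdiff : (M:ℤ) ∣ (q0 + q1*(b₁:ℤ)^(n+T) + q2*(b₂:ℤ)^(n+T) + q3*(b₃:ℤ)^(n+T) + q4*(b₄:ℤ)^(n+T))
        - (q0 + q1*(b₁:ℤ)^n + q2*(b₂:ℤ)^n + q3*(b₃:ℤ)^n + q4*(b₄:ℤ)^n) := by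
      have : (q0 + q1*(b₁:ℤ)^(n+T) + q2*(b₂:ℤ)^(n+T) + q3*(b₃:ℤ)^(n+T) + q4*(b₄:ℤ)^(n+T))
          - (q0 + q1*(b₁:ℤ)^n + q2*(b₂:ℤ)^n + q3*(b₃:ℤ)^n + q4*(b₄:ℤ)^n)
          = q1*((b₁:ℤ)^(n+T) - (b₁:ℤ)^n) + q2*((b₂:ℤ)^(n+T) - (b₂:ℤ)^n)
            + q3*((b₃:ℤ)^(n+T) - (b₃:ℤ)^n) + q4*((b₄:ℤ)^(n+T) - (b₄:ℤ)^n) := by ring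
      rw [this]
      exact dvd_add (dvd_add (dvd_add (c1.mul_left _) (c2.mul_left _)) (c3.mul_left _)) (c4.mul_left _)
    constructor
    · intro hd
      have := dvd_add hd hdiff
      simpa using this
    · intro hd
      have := dvd_sub hd hdiff
      simpa using this
  exact ⟨⟨T, N, hT, fun n hn => key n hn⟩, ⟨T, N, hT, fun n hn => not_congr (key n hn)⟩⟩

end Part4b
section Part4c

/-- The main condition set. -/
def Cset (p e : ℕ) (A B C : ℤ) (d₁ d₂ d₃ : ℕ) : Set ℕ :=
  {n : ℕ | (p:ℕ)^(e + padicValInt p (Dseq d₁ d₃ n)) ∣ (Fseq A B C d₁ d₂ d₃ n).natAbs}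

theorem mem_Cset_iff (p e : ℕ) (A B C : ℤ) (d₁ d₂ d₃ : ℕ) (n : ℕ) :
    n ∈ Cset p e A B C d₁ d₂ d₃ ↔
    ((p:ℤ))^(e + padicValInt p (Dseq d₁ d₃ n)) ∣ Fseq A B C d₁ d₂ d₃ n := by
  rw [Cset, Set.mem_setOf_eq, ← Int.natAbs_dvd_natAbs]
  simp [Int.natAbs_pow]

/-- `{n | M ∣ F n}` is eventually periodic. -/
theorem evper_F_dvd (M : ℕ) (hM : 0 < M) (A B C : ℤ) (d₁ d₂ d₃ : ℕ) :
    EvPer {n : ℕ | (M:ℤ) ∣ Fseq A B C d₁ d₂ d₃ n} := by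
  have h := (per_lin4 M hM (C*(d₃:ℤ)^2 - A*(d₃:ℤ) - B*(d₃:ℤ)) (B - C*(d₃:ℤ)) (A - C*(d₃:ℤ)) C 0
    d₁ d₂ (d₁*d₂) 1).1
  apply EvPer.congr_above 0 _ h
  intro n _
  simp only [Set.mem_setOf_eq]
  have heq : (C*(d₃:ℤ)^2 - A*(d₃:ℤ) - B*(d₃:ℤ)) + (B - C*(d₃:ℤ))*(d₁:ℤ)^n
      + (A - C*(d₃:ℤ))*(d₂:ℤ)^n + C*((d₁*d₂ : ℕ):ℤ)^n + 0*((1:ℕ):ℤ)^n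
      = Fseq A B C d₁ d₂ d₃ n := by
    simp only [Fseq, Dseq]
    push_cast
    ring
  rw [heq]

/-- `{n | M ∣ D n}` and complement are eventually periodic. -/
theorem evper_D_dvd (M : ℕ) (hM : 0 < M) (d d₃ : ℕ) :
    EvPer {n : ℕ | (M:ℤ) ∣ Dseq d d₃ n} ∧ EvPer {n : ℕ | ¬ ((M:ℤ) ∣ Dseq d d₃ n)} := by
  have h := per_lin4 M hM (-(d₃:ℤ)) 1 0 0 0 d 1 1 1
  have heq : ∀ n : ℕ, (-(d₃:ℤ)) + 1*(d:ℤ)^n + 0*((1:ℕ):ℤ)^n + 0*((1:ℕ):ℤ)^n + 0*((1:ℕ):ℤ)^n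
      = Dseq d d₃ n := by
    intro n
    simp only [Dseq]
    push_cast
    ring
  constructor
  · apply EvPer.congr_above 0 _ h.1
    intro n _
    simp only [Set.mem_setOf_eq, heq n]
  · apply EvPer.congr_above 0 _ h.2
    intro n _
    simp only [Set.mem_setOf_eq, heq n]

/-- `{n | M ∣ q0 + q2 * d₂^n}` sets (affine in one power). -/
theorem evper_affine (M : ℕ) (hM : 0 < M) (q0 q2 : ℤ) (d₂ : ℕ) :
    EvPer {n : ℕ | (M:ℤ) ∣ q0 + q2*(d₂:ℤ)^n} := by
  have h := (per_lin4 M hM q0 q2 0 0 0 d₂ 1 1 1).1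
  apply EvPer.congr_above 0 _ h
  intro n _
  simp only [Set.mem_setOf_eq]
  have heq : q0 + q2*(d₂:ℤ)^n + 0*((1:ℕ):ℤ)^n + 0*((1:ℕ):ℤ)^n + 0*((1:ℕ):ℤ)^n
      = q0 + q2*(d₂:ℤ)^n := by ring
  rw [heq]

/-- three-base linear set (used for the `p ∣ d₁`, `d₃ = 0` case). -/
theorem evper_lin3 (M : ℕ) (hM : 0 < M) (q1 q2 q3 : ℤ) (b₁ b₂ b₃ : ℕ) :
    EvPer {n : ℕ | (M:ℤ) ∣ q1*(b₁:ℤ)^n + q2*(b₂:ℤ)^n + q3*(b₃:ℤ)^n} := by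
  have h := (per_lin4 M hM 0 q1 q2 q3 0 b₁ b₂ b₃ 1).1
  apply EvPer.congr_above 0 _ h
  intro n _
  simp only [Set.mem_setOf_eq]
  have heq : (0:ℤ) + q1*(b₁:ℤ)^n + q2*(b₂:ℤ)^n + q3*(b₃:ℤ)^n + 0*((1:ℕ):ℤ)^n
      = q1*(b₁:ℤ)^n + q2*(b₂:ℤ)^n + q3*(b₃:ℤ)^n := by ring
  rw [heq]

/-- The shallow part of the condition set is eventually periodic. -/
theorem shallow_evper {p : ℕ} (hp : p.Prime) (e K : ℕ) (A B C : ℤ) (d₁ d₂ d₃ : ℕ)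
    (hd₁ : 2 ≤ d₁) (hd₂ : 2 ≤ d₂) (hpd₁ : ¬ p ∣ d₁) :
    EvPer {n : ℕ | n ∈ Cset p e A B C d₁ d₂ d₃ ∧ ¬ ((p:ℤ)^K ∣ Dseq d₁ d₃ n)} := by
  have hppos : 0 < p := hp.pos
  have hpne : ((p:ℤ)) ≠ 0 := by exact_mod_cast hppos.ne'
  set κ := K + e + 1 with hκ
  have hMpos : 0 < p^κ := Nat.pow_pos hppos
  have hco1 : Nat.Coprime d₁ (p^κ) :=
    (Nat.Coprime.pow_right _ (((Nat.Prime.coprime_iff_not_dvd hp).mpr hpd₁).symm))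
  obtain ⟨ρ₁, hρ₁pos, hρ₁dvd, _⟩ := ord_exists (p^κ) hMpos d₁ hco1
  have hcast : ((p^κ : ℕ) : ℤ) = (p:ℤ)^κ := by push_cast; ring
  obtain ⟨T, hTpos, hTd₁, hTd₂⟩ :
      ∃ T, 0 < T ∧ ((p:ℤ)^κ ∣ (d₁:ℤ)^T - 1) ∧
        (∀ n, κ ≤ n → (p:ℤ)^κ ∣ (d₂:ℤ)^(n+T) - (d₂:ℤ)^n) := by
    by_cases hpd₂ : p ∣ d₂
    · refine ⟨ρ₁, hρ₁pos, by rw [← hcast]; exact_mod_cast hρ₁dvd, fun n hn => ?_⟩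
      have h1 : (p:ℤ)^n ∣ (d₂:ℤ)^n := pow_dvd_pow_of_dvd (by exact_mod_cast hpd₂) n
      have h2 : (p:ℤ)^κ ∣ (d₂:ℤ)^n := dvd_trans (pow_dvd_pow _ hn) h1
      have h3 : (d₂:ℤ)^(n+ρ₁) - (d₂:ℤ)^n = (d₂:ℤ)^n * ((d₂:ℤ)^ρ₁ - 1) := by rw [pow_add]; ring
      rw [h3]
      exact Dvd.dvd.mul_right h2 _
    · have hco2 : Nat.Coprime d₂ (p^κ) :=
        (Nat.Coprime.pow_right _ (((Nat.Prime.coprime_iff_not_dvd hp).mpr hpd₂).symm))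
      obtain ⟨ρ₂, hρ₂pos, hρ₂dvd, _⟩ := ord_exists (p^κ) hMpos d₂ hco2
      refine ⟨ρ₁ * ρ₂, Nat.mul_pos hρ₁pos hρ₂pos, ?_, fun n hn => ?_⟩
      · have : ((d₁:ℤ)^ρ₁ - 1) ∣ ((d₁:ℤ)^(ρ₁*ρ₂) - 1) := by
          have := sub_dvd_pow_sub_pow ((d₁:ℤ)^ρ₁) 1 ρ₂
          simpa [← pow_mul] using this
        exact dvd_trans (by rw [← hcast]; exact_mod_cast hρ₁dvd) this
      · have hd : ((d₂:ℤ)^(ρ₁*ρ₂) - 1) = ((d₂:ℤ)^(ρ₂))^ρ₁ - 1 := by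
          rw [← pow_mul, mul_comm]
        have h4 : ((d₂:ℤ)^ρ₂ - 1) ∣ ((d₂:ℤ)^(ρ₁*ρ₂) - 1) := by
          rw [hd]
          simpa using sub_dvd_pow_sub_pow ((d₂:ℤ)^ρ₂) 1 ρ₁
        have h5 : (p:ℤ)^κ ∣ (d₂:ℤ)^(ρ₁*ρ₂) - 1 :=
          dvd_trans (by rw [← hcast]; exact_mod_cast hρ₂dvd) h4
        have h6 : (d₂:ℤ)^(n+ρ₁*ρ₂) - (d₂:ℤ)^n = (d₂:ℤ)^n * ((d₂:ℤ)^(ρ₁*ρ₂) - 1) := by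
          rw [pow_add]; ring
        rw [h6]
        exact Dvd.dvd.mul_left h5 _
  refine ⟨T, max (d₃+1) κ, hTpos, fun n hn => ?_⟩
  have hnd₃ : d₃ < n := by omega
  have hnκ : κ ≤ n := by omega
  have hD1n : Dseq d₁ d₃ n ≠ 0 := Dseq_ne hd₁ d₃ hnd₃
  have hD1nT : Dseq d₁ d₃ (n+T) ≠ 0 := Dseq_ne hd₁ d₃ (by omega)
  have hdiffd₁ : (p:ℤ)^κ ∣ (d₁:ℤ)^(n+T) - (d₁:ℤ)^n := by
    have h3 : (d₁:ℤ)^(n+T) - (d₁:ℤ)^n = (d₁:ℤ)^n * ((d₁:ℤ)^T - 1) := by rw [pow_add]; ring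
    rw [h3]
    exact Dvd.dvd.mul_left hTd₁ _
  have hdiff1 : (p:ℤ)^κ ∣ Dseq d₁ d₃ (n+T) - Dseq d₁ d₃ n := by
    simp only [Dseq]
    simpa using hdiffd₁
  have hdiffF : (p:ℤ)^κ ∣ Fseq A B C d₁ d₂ d₃ (n+T) - Fseq A B C d₁ d₂ d₃ n := by
    exact Fseq_diff_dvd _ A B C d₁ d₂ d₃ n T hdiffd₁ (hTd₂ n hnκ)
  by_cases hdeep : (p:ℤ)^K ∣ Dseq d₁ d₃ n
  · have hdeepT : (p:ℤ)^K ∣ Dseq d₁ d₃ (n+T) := by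
      have h7 : Dseq d₁ d₃ (n+T) = Dseq d₁ d₃ n + (Dseq d₁ d₃ (n+T) - Dseq d₁ d₃ n) := by ring
      rw [h7]
      exact dvd_add hdeep (dvd_trans (pow_dvd_pow _ (by omega)) hdiff1)
    simp only [Set.mem_setOf_eq]
    constructor
    · rintro ⟨_, hc⟩; exact absurd hdeep hc
    · rintro ⟨_, hc⟩; exact absurd hdeepT hc
  · set v := padicValInt p (Dseq d₁ d₃ n) with hv
    have hvK : v < K := by
      by_contra hcon
      exact hdeep ((val_dvd_iff hp _ hD1n K).mpr (by omega))
    have hvT : padicValInt p (Dseq d₁ d₃ (n+T)) = v := by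
      have h7 : Dseq d₁ d₃ (n+T) = Dseq d₁ d₃ n + (Dseq d₁ d₃ (n+T) - Dseq d₁ d₃ n) := by ring
      rw [h7]
      exact val_add_eq hp hD1n rfl (dvd_trans (pow_dvd_pow _ (by omega)) hdiff1)
    have hshT : ¬ ((p:ℤ)^K ∣ Dseq d₁ d₃ (n+T)) := by
      intro hcon
      rw [val_dvd_iff hp _ hD1nT, hvT] at hcon
      omega
    have hcond : ((p:ℤ))^(e + v) ∣ Fseq A B C d₁ d₂ d₃ n ↔
        ((p:ℤ))^(e + v) ∣ Fseq A B C d₁ d₂ d₃ (n+T) := by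
      have hd : (p:ℤ)^(e+v) ∣ Fseq A B C d₁ d₂ d₃ (n+T) - Fseq A B C d₁ d₂ d₃ n :=
        dvd_trans (pow_dvd_pow _ (by omega)) hdiffF
      constructor
      · intro h
        have := dvd_add h hd
        simpa using this
      · intro h
        have := dvd_sub h hd
        simpa using this
    simp only [Set.mem_setOf_eq, mem_Cset_iff]
    rw [hvT, ← hv]
    constructor
    · rintro ⟨h1, _⟩; exact ⟨hcond.mp h1, hshT⟩
    · rintro ⟨h1, _⟩; exact ⟨hcond.mpr h1, hdeep⟩

end Part4c
section Part4d

variable {p : ℕ}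

theorem cast_ppow (p k : ℕ) : ((p^k : ℕ) : ℤ) = (p:ℤ)^k := by push_cast; ring

theorem evper_of_val_const (hp : p.Prime) (e : ℕ) (A B C : ℤ) (d₁ d₂ d₃ : ℕ)
    (vbar N₁ : ℕ) (hval : ∀ n, N₁ ≤ n → padicValInt p (Dseq d₁ d₃ n) = vbar) :
    EvPer (Cset p e A B C d₁ d₂ d₃) := by
  apply EvPer.congr_above N₁ _
    (evper_F_dvd (p^(e+vbar)) (Nat.pow_pos hp.pos) A B C d₁ d₂ d₃)
  intro n hn
  rw [mem_Cset_iff, hval n hn, Set.mem_setOf_eq, cast_ppow]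

/-- Case II : `p ∤ d₁` and `p ∣ d₃` (or `d₃ = 0`). -/
theorem caseII (hp : p.Prime) (e : ℕ) (A B C : ℤ) (d₁ d₂ d₃ : ℕ)
    (hpd₁ : ¬ p ∣ d₁) (hpd₃ : (p:ℤ) ∣ (d₃:ℤ)) :
    EvPer (Cset p e A B C d₁ d₂ d₃) := by
  apply evper_of_val_const hp e A B C d₁ d₂ d₃ 0 0
  intro n _
  apply val_eq_of hp _ 0 (Dseq d₁ d₃ n) (by ring)
  intro hcon
  have h1 : (p:ℤ) ∣ (d₁:ℤ)^n := by
    have : (d₁:ℤ)^n = Dseq d₁ d₃ n + (d₃:ℤ) := by simp [Dseq]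
    rw [this]
    exact dvd_add hcon hpd₃
  exact not_dvd_pow_of_not_dvd hp (by exact_mod_cast fun h => hpd₁ (Int.natCast_dvd_natCast.mp h)) n h1

/-- Case I.b : `p ∣ d₁` and `d₃ ≥ 1`. -/
theorem caseIb (hp : p.Prime) (e : ℕ) (A B C : ℤ) (d₁ d₂ d₃ : ℕ)
    (hpd₁ : p ∣ d₁) (hd₃ : 1 ≤ d₃) :
    EvPer (Cset p e A B C d₁ d₂ d₃) := by
  set w := padicValNat p d₃ with hw
  apply evper_of_val_const hp e A B C d₁ d₂ d₃ w (w+1)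
  intro n hn
  have hx : ((d₃:ℕ):ℤ) ≠ 0 := by exact_mod_cast (by omega : d₃ ≠ 0)
  have hvx : padicValInt p ((d₃:ℕ):ℤ) = w := by rw [val_of_nat]
  have hy : (p:ℤ)^(w+1) ∣ (d₁:ℤ)^n := by
    have h1 : (p:ℤ)^n ∣ (d₁:ℤ)^n :=
      pow_dvd_pow_of_dvd (by exact_mod_cast Int.natCast_dvd_natCast.mpr hpd₁) n
    exact dvd_trans (pow_dvd_pow _ (by omega)) h1
  exact val_sub_eq hp hx hvx hy

/-- valuation of `d^n` when `d = p^w * d'`, `¬ p ∣ d'`. -/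
theorem val_pow_split (hp : p.Prime) {d d' w : ℕ} (hd : d = p^w * d') (hd' : ¬ p ∣ d') (n : ℕ) :
    padicValInt p ((d:ℤ)^n) = n * w ∧ (d:ℤ)^n = (p:ℤ)^(n*w) * (d':ℤ)^n := by
  have hsplit : (d:ℤ)^n = (p:ℤ)^(n*w) * (d':ℤ)^n := by
    rw [hd]
    push_cast
    rw [mul_pow, ← pow_mul, mul_comm w n]
  refine ⟨?_, hsplit⟩
  apply val_eq_of hp _ _ _ hsplit
  exact not_dvd_pow_of_not_dvd hp (by exact_mod_cast fun h => hd' (Int.natCast_dvd_natCast.mp h)) n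

/-- Case I.a : `p ∣ d₁` and `d₃ = 0`. -/
theorem caseIa (hp : p.Prime) (e : ℕ) (A B C : ℤ) (d₁ d₂ : ℕ)
    (hd₁ : 2 ≤ d₁) (hd₂ : 2 ≤ d₂) (hpd₁ : p ∣ d₁) :
    EvPer (Cset p e A B C d₁ d₂ 0) := by
  obtain ⟨d₁', hd₁eq, hd₁'⟩ := nat_val_decomp hp d₁ (by omega)
  set w₁ := padicValNat p d₁ with hw₁
  have hw₁pos : 1 ≤ w₁ := by
    by_contra hcon
    have : w₁ = 0 := by omega
    rw [this] at hd₁eq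
    simp at hd₁eq
    exact hd₁' (hd₁eq ▸ hpd₁)
  have hDval : ∀ n : ℕ, padicValInt p (Dseq d₁ 0 n) = n * w₁ := by
    intro n
    have hD : Dseq d₁ 0 n = (d₁:ℤ)^n := by simp [Dseq]
    rw [hD]
    exact (val_pow_split hp hd₁eq hd₁' n).1
  have hd₁split := fun n => (val_pow_split hp hd₁eq hd₁' n).2
  -- reduce membership
  have hmem : ∀ n : ℕ, n ∈ Cset p e A B C d₁ d₂ 0 ↔
      (p:ℤ)^(e + n*w₁) ∣ Fseq A B C d₁ d₂ 0 n := by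
    intro n
    rw [mem_Cset_iff, hDval n]
  by_cases hA : A = 0
  · -- condition ⟺ p^e ∣ B + C d₂^n
    apply EvPer.congr_above 0 _
      (evper_affine (p^e) (Nat.pow_pos hp.pos) B C d₂)
    intro n _
    rw [hmem n, Set.mem_setOf_eq, cast_ppow]
    have hF : Fseq A B C d₁ d₂ 0 n = (p:ℤ)^(n*w₁) * ((d₁':ℤ)^n * (B + C*(d₂:ℤ)^n)) := by
      simp only [Fseq, Dseq, hA, Nat.cast_zero, sub_zero]
      rw [hd₁split n]
      ring
    rw [hF, show e + n*w₁ = n*w₁ + e by omega, cancel_exact_pow hp]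
    constructor
    · intro h
      exact cancel_unit hp (not_dvd_pow_of_not_dvd hp
        (by exact_mod_cast fun h => hd₁' (Int.natCast_dvd_natCast.mp h)) n) h
    · intro h
      exact Dvd.dvd.mul_left h _
  · obtain ⟨d₂', hd₂eq, hd₂'⟩ := nat_val_decomp hp d₂ (by omega)
    set w₂ := padicValNat p d₂ with hw₂
    set a₀ := padicValInt p A with ha₀
    by_cases hw : w₂ < w₁
    · -- eventually false
      apply EvPer.of_const (a₀ + e + 2) False
      intro n hn
      simp only [iff_false]
      intro hmemn
      rw [hmem n] at hmemn
      have hd₂n : ((d₂:ℤ))^n ≠ 0 := pow_ne_zero _ (by exact_mod_cast (by omega : d₂ ≠ 0))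
      have hvA : padicValInt p (A * (d₂:ℤ)^n) = a₀ + n*w₂ := by
        rw [val_mul hp hA hd₂n, (val_pow_split hp hd₂eq hd₂' n).1]
      have hrest : (p:ℤ)^(a₀ + n*w₂ + 1) ∣ (d₁:ℤ)^n * (B + C*(d₂:ℤ)^n) := by
        apply Dvd.dvd.mul_right
        rw [hd₁split n]
        apply Dvd.dvd.mul_right
        apply pow_dvd_pow
        have h9 : n * (w₂+1) ≤ n * w₁ := Nat.mul_le_mul_left n (by omega)
        have h10 : n * (w₂+1) = n*w₂ + n := by ring
        omega
      have hFsplit : A * (d₂:ℤ)^n = Fseq A B C d₁ d₂ 0 n - (d₁:ℤ)^n * (B + C*(d₂:ℤ)^n) := by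
        simp only [Fseq, Dseq, Nat.cast_zero, sub_zero]
        ring
      have hdvdA : (p:ℤ)^(a₀ + n*w₂ + 1) ∣ A * (d₂:ℤ)^n := by
        rw [hFsplit]
        apply dvd_sub _ hrest
        apply dvd_trans (pow_dvd_pow _ _) hmemn
        have h9 : n * (w₂+1) ≤ n * w₁ := Nat.mul_le_mul_left n (by omega)
        have h10 : n * (w₂+1) = n*w₂ + n := by ring
        omega
      rw [val_dvd_iff hp _ (mul_ne_zero hA hd₂n), hvA] at hdvdA
      omega
    · -- w₁ ≤ w₂
      push_neg at hw
      set e₂ := p^(w₂-w₁) * d₂' with he₂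
      have hd₂eq2 : d₂ = p^w₁ * e₂ := by
        rw [he₂, hd₂eq, ← mul_assoc, ← pow_add]
        congr 2
        omega
      apply EvPer.congr_above 0 _
        (evper_lin3 (p^e) (Nat.pow_pos hp.pos) A B C e₂ d₁' (d₁'*d₂))
      intro n _
      rw [hmem n, Set.mem_setOf_eq, cast_ppow]
      have hF : Fseq A B C d₁ d₂ 0 n =
          (p:ℤ)^(n*w₁) * (A*(e₂:ℤ)^n + B*(d₁':ℤ)^n + C*((d₁'*d₂ : ℕ):ℤ)^n) := by
        simp only [Fseq, Dseq, Nat.cast_zero, sub_zero]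
        have h1 := hd₁split n
        have h2 : (d₂:ℤ)^n = (p:ℤ)^(n*w₁) * (e₂:ℤ)^n := by
          rw [hd₂eq2]
          push_cast
          rw [mul_pow, ← pow_mul, mul_comm w₁ n]
        have h3 : ((d₁'*d₂ : ℕ):ℤ)^n = (d₁':ℤ)^n * (d₂:ℤ)^n := by
          push_cast
          rw [mul_pow]
        rw [h3, h1, h2]
        ring
      rw [hF, show e + n*w₁ = n*w₁ + e by omega, cancel_exact_pow hp]
end Part4d
section Part4e

variable {p : ℕ}

theorem two_le_pow {d : ℕ} (hd : 2 ≤ d) {ρ : ℕ} (hρ : 1 ≤ ρ) : (2:ℤ) ≤ (d:ℤ)^ρ := by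
  calc (2:ℤ) = 2^1 := by norm_num
  _ ≤ 2^ρ := pow_le_pow_right₀ (by norm_num) hρ
  _ ≤ (d:ℤ)^ρ := pow_le_pow_left₀ (by norm_num) (by exact_mod_cast hd) ρ

theorem dvd_iff_dvd_add {a X Z : ℤ} (h : a ∣ Z) : a ∣ X ↔ a ∣ X + Z := by
  constructor
  · intro h1; exact dvd_add h1 h
  · intro h1; have := dvd_sub h1 h; simpa using this

/-- The key constancy of the condition on the doubly-deep region. -/
theorem deep_const (hp : p.Prime) (e : ℕ) (A B C : ℤ) (d₁ d₂ d₃ : ℕ)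
    (hd₁ : 2 ≤ d₁) (hd₂ : 2 ≤ d₂) (hd₃ : 1 ≤ d₃)
    (hpd₁ : ¬ p ∣ d₁) (hpd₂ : ¬ p ∣ d₂)
    (ρ : ℕ) (hρpos : 0 < ρ)
    (hρ₁ : (p:ℤ)^(e+2) ∣ (d₁:ℤ)^ρ - 1) (hρ₂ : (p:ℤ)^(e+2) ∣ (d₂:ℤ)^ρ - 1)
    (hρdvd : ∀ s : ℕ, (p:ℤ)^(e+2) ∣ (d₁:ℤ)^s - 1 → (p:ℤ)^(e+2) ∣ (d₂:ℤ)^s - 1 → ρ ∣ s)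
    (hW : ∀ K N : ℕ, ∃ n, N ≤ n ∧ (p:ℤ)^K ∣ Dseq d₁ d₃ n ∧ (p:ℤ)^K ∣ Dseq d₂ d₃ n)
    (n : ℕ) (hn : d₃ < n)
    (hdeep₁ : (p:ℤ)^(e+2) ∣ Dseq d₁ d₃ n) (hdeep₂ : (p:ℤ)^(e+2) ∣ Dseq d₂ d₃ n) :
    ((p:ℤ)^(e + padicValInt p (Dseq d₁ d₃ n)) ∣ Fseq A B C d₁ d₂ d₃ n ↔
     (p:ℤ)^(e + padicValInt p ((d₁:ℤ)^ρ - 1)) ∣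
       A*((d₂:ℤ)^ρ - 1) + B*((d₁:ℤ)^ρ - 1)) := by
  have hpne : ((p:ℤ)) ≠ 0 := by exact_mod_cast hp.pos.ne'
  have hpdz₁ : ¬ ((p:ℤ) ∣ (d₁:ℤ)) := fun h => hpd₁ (Int.natCast_dvd_natCast.mp h)
  have hpdz₂ : ¬ ((p:ℤ) ∣ (d₂:ℤ)) := fun h => hpd₂ (Int.natCast_dvd_natCast.mp h)
  set Λ := e + 2 with hΛ
  set x := (d₁:ℤ)^ρ - 1 with hxdef
  set y := (d₂:ℤ)^ρ - 1 with hydef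
  have hxpos : 0 < x := by have := two_le_pow hd₁ hρpos; omega
  have hypos : 0 < y := by have := two_le_pow hd₂ hρpos; omega
  set lam₁ := padicValInt p x with hlam₁
  set lam₂ := padicValInt p y with hlam₂
  have hlamΛ₁ : Λ ≤ lam₁ := (val_dvd_iff hp x hxpos.ne' Λ).mp hρ₁
  have hlamΛ₂ : Λ ≤ lam₂ := (val_dvd_iff hp y hypos.ne' Λ).mp hρ₂
  set v₁ := padicValInt p (Dseq d₁ d₃ n) with hv₁def
  set v₂ := padicValInt p (Dseq d₂ d₃ n) with hv₂def
  have hD₁ne : Dseq d₁ d₃ n ≠ 0 := Dseq_ne hd₁ d₃ hn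
  have hD₂ne : Dseq d₂ d₃ n ≠ 0 := Dseq_ne hd₂ d₃ hn
  set H := v₁ + v₂ + lam₁ + lam₂ + e + 3 with hHdef
  obtain ⟨n', hn'ge, hH₁, hH₂⟩ := hW H (n+1)
  obtain ⟨s, hs⟩ : ∃ s : ℕ, n' = n + s := ⟨n' - n, by omega⟩
  have hspos : 1 ≤ s := by omega
  have hΛH : Λ ≤ H := by omega
  -- Step A : ρ ∣ s
  have hds₁ : (p:ℤ)^Λ ∣ (d₁:ℤ)^s - 1 := by
    have h1 : (p:ℤ)^Λ ∣ Dseq d₁ d₃ n' - Dseq d₁ d₃ n :=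
      dvd_sub (dvd_trans (pow_dvd_pow _ hΛH) hH₁) hdeep₁
    rw [hs, Dseq_diff] at h1
    exact cancel_unit hp (not_dvd_pow_of_not_dvd hp hpdz₁ n) h1
  have hds₂ : (p:ℤ)^Λ ∣ (d₂:ℤ)^s - 1 := by
    have h1 : (p:ℤ)^Λ ∣ Dseq d₂ d₃ n' - Dseq d₂ d₃ n :=
      dvd_sub (dvd_trans (pow_dvd_pow _ hΛH) hH₂) hdeep₂
    rw [hs, Dseq_diff] at h1
    exact cancel_unit hp (not_dvd_pow_of_not_dvd hp hpdz₂ n) h1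
  obtain ⟨t, hst⟩ := hρdvd s hds₁ hds₂
  have htpos : 1 ≤ t := by
    rcases Nat.eq_zero_or_pos t with rfl | h
    · omega
    · exact h
  set vt := padicValNat p t with hvt
  have htne : (t:ℤ) ≠ 0 := by exact_mod_cast (by omega : t ≠ 0)
  have hvtdvd : (p:ℤ)^vt ∣ (t:ℤ) := by exact_mod_cast Int.natCast_dvd_natCast.mpr pow_padicValNat_dvd
  -- Step B : binomial expansions
  have hbx : (d₁:ℤ)^s = (1 + x)^t := by
    rw [hxdef]
    rw [show (1 + ((d₁:ℤ)^ρ - 1)) = (d₁:ℤ)^ρ by ring, ← pow_mul, ← hst]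
  have hby : (d₂:ℤ)^s = (1 + y)^t := by
    rw [hydef]
    rw [show (1 + ((d₂:ℤ)^ρ - 1)) = (d₂:ℤ)^ρ by ring, ← pow_mul, ← hst]
  have hlam₁2 : 2 ≤ lam₁ := by omega
  have hlam₂2 : 2 ≤ lam₂ := by omega
  have hR₁ : (p:ℤ)^(2*lam₁ - 1 + vt) ∣ (1+x)^t - 1 - t*x :=
    bin_approx hp lam₁ hlam₁2 x (val_pow_dvd hp x) t
  have hR₂ : (p:ℤ)^(2*lam₂ - 1 + vt) ∣ (1+y)^t - 1 - t*y :=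
    bin_approx hp lam₂ hlam₂2 y (val_pow_dvd hp y) t
  set R₁ := (1+x)^t - 1 - t*x with hR₁def
  set R₂ := (1+y)^t - 1 - t*y with hR₂def
  -- Step C : exact valuations
  have hdpow₁ : (d₁:ℤ)^s - 1 ≠ 0 := by have := two_le_pow hd₁ hspos; omega
  have hdpow₂ : (d₂:ℤ)^s - 1 ≠ 0 := by have := two_le_pow hd₂ hspos; omega
  have hsx : (d₁:ℤ)^s - 1 = (t:ℤ)*x + R₁ := by rw [hR₁def, ← hbx]; ring
  have hsy : (d₂:ℤ)^s - 1 = (t:ℤ)*y + R₂ := by rw [hR₂def, ← hby]; ring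
  have htxval : padicValInt p ((t:ℤ)*x) = vt + lam₁ := by
    rw [val_nat_mul hp t (by omega) hxpos.ne']
  have htyval : padicValInt p ((t:ℤ)*y) = vt + lam₂ := by
    rw [val_nat_mul hp t (by omega) hypos.ne']
  have hsxval : padicValInt p ((d₁:ℤ)^s - 1) = vt + lam₁ := by
    rw [hsx]
    apply val_add_eq hp (mul_ne_zero htne hxpos.ne') htxval
    exact dvd_trans (pow_dvd_pow _ (by omega)) hR₁
  have hsyval : padicValInt p ((d₂:ℤ)^s - 1) = vt + lam₂ := by
    rw [hsy]
    apply val_add_eq hp (mul_ne_zero htne hypos.ne') htyval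
    exact dvd_trans (pow_dvd_pow _ (by omega)) hR₂
  have hΔ₁ : Dseq d₁ d₃ n' - Dseq d₁ d₃ n = (d₁:ℤ)^n * ((d₁:ℤ)^s - 1) := by
    rw [hs]; exact Dseq_diff d₁ d₃ n s
  have hΔ₂ : Dseq d₂ d₃ n' - Dseq d₂ d₃ n = (d₂:ℤ)^n * ((d₂:ℤ)^s - 1) := by
    rw [hs]; exact Dseq_diff d₂ d₃ n s
  have hΔ₁val : padicValInt p (Dseq d₁ d₃ n' - Dseq d₁ d₃ n) = vt + lam₁ := by
    rw [hΔ₁]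
    exact val_mul_unit hp (not_dvd_pow_of_not_dvd hp hpdz₁ n) hsxval hdpow₁
  have hΔ₂val : padicValInt p (Dseq d₂ d₃ n' - Dseq d₂ d₃ n) = vt + lam₂ := by
    rw [hΔ₂]
    exact val_mul_unit hp (not_dvd_pow_of_not_dvd hp hpdz₂ n) hsyval hdpow₂
  have hΔ₁ne : Dseq d₁ d₃ n' - Dseq d₁ d₃ n ≠ 0 := by
    rw [hΔ₁]
    exact mul_ne_zero (pow_ne_zero _ (by exact_mod_cast (by omega : d₁ ≠ 0))) hdpow₁
  have hΔ₂ne : Dseq d₂ d₃ n' - Dseq d₂ d₃ n ≠ 0 := by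
    rw [hΔ₂]
    exact mul_ne_zero (pow_ne_zero _ (by exact_mod_cast (by omega : d₂ ≠ 0))) hdpow₂
  -- vt + lam₁ < H
  have hvtlt₁ : vt + lam₁ < H := by
    by_contra hcon
    push_neg at hcon
    have h1 : (p:ℤ)^H ∣ Dseq d₁ d₃ n' - Dseq d₁ d₃ n :=
      (val_dvd_iff hp _ hΔ₁ne H).mpr (by omega)
    have h2 : (p:ℤ)^H ∣ Dseq d₁ d₃ n := by
      have := dvd_sub hH₁ h1
      simpa using this
    have := (val_dvd_iff hp _ hD₁ne H).mp h2
    omega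
  have hvtlt₂ : vt + lam₂ < H := by
    by_contra hcon
    push_neg at hcon
    have h1 : (p:ℤ)^H ∣ Dseq d₂ d₃ n' - Dseq d₂ d₃ n :=
      (val_dvd_iff hp _ hΔ₂ne H).mpr (by omega)
    have h2 : (p:ℤ)^H ∣ Dseq d₂ d₃ n := by
      have := dvd_sub hH₂ h1
      simpa using this
    have := (val_dvd_iff hp _ hD₂ne H).mp h2
    omega
  have hv₁eq : v₁ = lam₁ + vt := by
    have h1 : padicValInt p (Dseq d₁ d₃ n' - (Dseq d₁ d₃ n' - Dseq d₁ d₃ n)) = vt + lam₁ :=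
      val_sub_eq hp hΔ₁ne hΔ₁val (dvd_trans (pow_dvd_pow _ (by omega)) hH₁)
    rw [show Dseq d₁ d₃ n' - (Dseq d₁ d₃ n' - Dseq d₁ d₃ n) = Dseq d₁ d₃ n by ring] at h1
    rw [hv₁def, h1]; omega
  have hv₂eq : v₂ = lam₂ + vt := by
    have h1 : padicValInt p (Dseq d₂ d₃ n' - (Dseq d₂ d₃ n' - Dseq d₂ d₃ n)) = vt + lam₂ :=
      val_sub_eq hp hΔ₂ne hΔ₂val (dvd_trans (pow_dvd_pow _ (by omega)) hH₂)
    rw [show Dseq d₂ d₃ n' - (Dseq d₂ d₃ n' - Dseq d₂ d₃ n) = Dseq d₂ d₃ n by ring] at h1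
    rw [hv₂def, h1]; omega
  -- Step D : key congruence
  set Y := x * Dseq d₂ d₃ n - y * Dseq d₁ d₃ n with hYdef
  have hYdvd : (p:ℤ)^(v₁ + lam₂ + e) ∣ Y := by
    have hterm1 : (p:ℤ)^(v₁ + lam₂ + e) ∣ x * Dseq d₂ d₃ n' - y * Dseq d₁ d₃ n' := by
      apply dvd_sub
      · exact Dvd.dvd.mul_left (dvd_trans (pow_dvd_pow _ (by omega)) hH₂) x
      · exact Dvd.dvd.mul_left (dvd_trans (pow_dvd_pow _ (by omega)) hH₁) y
    have hiden : x * (Dseq d₂ d₃ n' - Dseq d₂ d₃ n) - y * (Dseq d₁ d₃ n' - Dseq d₁ d₃ n)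
        = (t:ℤ)*x*y*((d₂:ℤ)^n - (d₁:ℤ)^n) + x*(d₂:ℤ)^n*R₂ - y*(d₁:ℤ)^n*R₁ := by
      rw [hΔ₁, hΔ₂, hsx, hsy]
      ring
    have hterm2 : (p:ℤ)^(v₁ + lam₂ + e) ∣
        x * (Dseq d₂ d₃ n' - Dseq d₂ d₃ n) - y * (Dseq d₁ d₃ n' - Dseq d₁ d₃ n) := by
      rw [hiden]
      apply dvd_sub
      apply dvd_add
      · -- t x y (d₂ⁿ - d₁ⁿ)
        have hdd : (p:ℤ)^Λ ∣ (d₂:ℤ)^n - (d₁:ℤ)^n := by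
          have : (d₂:ℤ)^n - (d₁:ℤ)^n = Dseq d₂ d₃ n - Dseq d₁ d₃ n := by
            simp [Dseq]
          rw [this]
          exact dvd_sub hdeep₂ hdeep₁
        have hbig : (p:ℤ)^(vt + lam₁ + lam₂ + Λ) ∣ (t:ℤ)*x*y*((d₂:ℤ)^n - (d₁:ℤ)^n) := by
          have e1 : (p:ℤ)^(vt + lam₁ + lam₂ + Λ) =
              (p:ℤ)^vt * (p:ℤ)^lam₁ * (p:ℤ)^lam₂ * (p:ℤ)^Λ := by
            rw [← pow_add, ← pow_add, ← pow_add]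
          rw [e1]
          exact mul_dvd_mul (mul_dvd_mul (mul_dvd_mul hvtdvd (val_pow_dvd hp x))
            (val_pow_dvd hp y)) hdd
        exact dvd_trans (pow_dvd_pow _ (by omega)) hbig
      · -- x d₂ⁿ R₂
        have hbig : (p:ℤ)^(lam₁ + (2*lam₂ - 1 + vt)) ∣ x*(d₂:ℤ)^n*R₂ := by
          rw [pow_add]
          exact mul_dvd_mul (Dvd.dvd.mul_right (val_pow_dvd hp x) _) hR₂
        exact dvd_trans (pow_dvd_pow _ (by omega)) hbig
      · -- y d₁ⁿ R₁
        have hbig : (p:ℤ)^(lam₂ + (2*lam₁ - 1 + vt)) ∣ y*(d₁:ℤ)^n*R₁ := by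
          rw [pow_add]
          exact mul_dvd_mul (Dvd.dvd.mul_right (val_pow_dvd hp y) _) hR₁
        exact dvd_trans (pow_dvd_pow _ (by omega)) hbig
    have hfin : Y = (x * Dseq d₂ d₃ n' - y * Dseq d₁ d₃ n')
        - (x * (Dseq d₂ d₃ n' - Dseq d₂ d₃ n) - y * (Dseq d₁ d₃ n' - Dseq d₁ d₃ n)) := by
      rw [hYdef]; ring
    rw [hfin]
    exact dvd_sub hterm1 hterm2
  -- Step E : conclusion
  obtain ⟨ux, hux, huxnd⟩ := val_decomp hp x hxpos.ne'
  obtain ⟨uy, huy, huynd⟩ := val_decomp hp y hypos.ne'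
  obtain ⟨U₁, hU₁, hU₁nd⟩ := val_decomp hp _ hD₁ne
  obtain ⟨U₂, hU₂, hU₂nd⟩ := val_decomp hp _ hD₂ne
  rw [← hlam₁] at hux
  rw [← hlam₂] at huy
  rw [← hv₁def] at hU₁
  rw [← hv₂def] at hU₂
  set G := A*y + B*x with hGdef
  set S := A * Dseq d₂ d₃ n + B * Dseq d₁ d₃ n with hSdef
  have step1 : (p:ℤ)^(e + v₁) ∣ Fseq A B C d₁ d₂ d₃ n ↔ (p:ℤ)^(e + v₁) ∣ S := by
    have hCterm : (p:ℤ)^(e + v₁) ∣ C * (Dseq d₁ d₃ n * Dseq d₂ d₃ n) := by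
      apply Dvd.dvd.mul_left
      have h1 : (p:ℤ)^(v₁ + v₂) ∣ Dseq d₁ d₃ n * Dseq d₂ d₃ n := by
        rw [pow_add]
        exact mul_dvd_mul (val_pow_dvd hp _) (val_pow_dvd hp _)
      exact dvd_trans (pow_dvd_pow _ (by omega)) h1
    have : Fseq A B C d₁ d₂ d₃ n = S + C * (Dseq d₁ d₃ n * Dseq d₂ d₃ n) := by
      rw [Fseq, hSdef]
    rw [this]
    exact (dvd_iff_dvd_add hCterm).symm
  by_cases hll : lam₁ ≤ lam₂
  · have step2 : (p:ℤ)^(e + v₁) ∣ S ↔ (p:ℤ)^(lam₁ + (e + v₁)) ∣ x * S := by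
      constructor
      · intro h
        rw [hux, mul_assoc]
        rw [cancel_exact_pow hp]
        exact Dvd.dvd.mul_left h ux
      · intro h
        rw [hux, mul_assoc, cancel_exact_pow hp] at h
        exact cancel_unit hp huxnd h
    have step3 : x * S = Dseq d₁ d₃ n * G + A * Y := by
      rw [hSdef, hGdef, hYdef]; ring
    have step4 : (p:ℤ)^(lam₁ + (e + v₁)) ∣ A * Y := by
      apply Dvd.dvd.mul_left
      exact dvd_trans (pow_dvd_pow _ (by omega)) hYdvd
    have step5 : (p:ℤ)^(lam₁ + (e + v₁)) ∣ x * S ↔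
        (p:ℤ)^(lam₁ + (e + v₁)) ∣ Dseq d₁ d₃ n * G := by
      rw [step3]
      exact (dvd_iff_dvd_add step4).symm
    have step6 : (p:ℤ)^(lam₁ + (e + v₁)) ∣ Dseq d₁ d₃ n * G ↔ (p:ℤ)^(e + lam₁) ∣ G := by
      rw [hU₁, mul_assoc, show lam₁ + (e + v₁) = v₁ + (e + lam₁) by omega, cancel_exact_pow hp]
      constructor
      · intro h
        exact cancel_unit hp hU₁nd h
      · intro h
        exact Dvd.dvd.mul_left h U₁
    rw [step1, step2, step5, step6]
  · push_neg at hll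
    have step2 : (p:ℤ)^(e + v₁) ∣ S ↔ (p:ℤ)^(lam₂ + (e + v₁)) ∣ y * S := by
      constructor
      · intro h
        rw [huy, mul_assoc]
        rw [cancel_exact_pow hp]
        exact Dvd.dvd.mul_left h uy
      · intro h
        rw [huy, mul_assoc, cancel_exact_pow hp] at h
        exact cancel_unit hp huynd h
    have step3 : y * S = Dseq d₂ d₃ n * G - B * Y := by
      rw [hSdef, hGdef, hYdef]; ring
    have step4 : (p:ℤ)^(lam₂ + (e + v₁)) ∣ (- B) * Y := by
      apply Dvd.dvd.mul_left
      exact dvd_trans (pow_dvd_pow _ (by omega)) hYdvd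
    have step5 : (p:ℤ)^(lam₂ + (e + v₁)) ∣ y * S ↔
        (p:ℤ)^(lam₂ + (e + v₁)) ∣ Dseq d₂ d₃ n * G := by
      rw [step3, show Dseq d₂ d₃ n * G - B * Y = Dseq d₂ d₃ n * G + (-B) * Y by ring]
      exact (dvd_iff_dvd_add step4).symm
    have step6 : (p:ℤ)^(lam₂ + (e + v₁)) ∣ Dseq d₂ d₃ n * G ↔ (p:ℤ)^(e + lam₁) ∣ G := by
      rw [hU₂, mul_assoc, show lam₂ + (e + v₁) = v₂ + (e + lam₁) by omega, cancel_exact_pow hp]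
      constructor
      · intro h
        exact cancel_unit hp hU₂nd h
      · intro h
        exact Dvd.dvd.mul_left h U₂
    rw [step1, step2, step5, step6]
end Part4e
section Part4f

variable {p : ℕ}

theorem evper_BCD (hp : p.Prime) (e : ℕ) (B C : ℤ) (d₂ d₃ : ℕ) :
    EvPer {n : ℕ | (p:ℤ)^e ∣ B + C * Dseq d₂ d₃ n} := by
  apply EvPer.congr_above 0 _
    (evper_affine (p^e) (Nat.pow_pos hp.pos) (B - C*(d₃:ℤ)) C d₂)
  intro n _
  simp only [Set.mem_setOf_eq, cast_ppow]
  have heq : B - C*(d₃:ℤ) + C*(d₂:ℤ)^n = B + C * Dseq d₂ d₃ n := by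
    simp only [Dseq]; ring
  rw [heq]

theorem evper_Vdeep (hp : p.Prime) (K : ℕ) (d d₃ : ℕ) :
    EvPer {n : ℕ | (p:ℤ)^K ∣ Dseq d d₃ n} ∧ EvPer {n : ℕ | ¬ ((p:ℤ)^K ∣ Dseq d d₃ n)} := by
  have h := evper_D_dvd (p^K) (Nat.pow_pos hp.pos) d d₃
  constructor
  · apply EvPer.congr_above 0 _ h.1
    intro n _
    simp only [Set.mem_setOf_eq, cast_ppow]
  · apply EvPer.congr_above 0 _ h.2
    intro n _
    simp only [Set.mem_setOf_eq, cast_ppow]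

/-- When `A = 0` the condition simplifies. -/
theorem condA0 (hp : p.Prime) (e : ℕ) (B C : ℤ) (d₁ d₂ d₃ : ℕ) (hd₁ : 2 ≤ d₁)
    {n : ℕ} (hn : d₃ < n) :
    ((p:ℤ)^(e + padicValInt p (Dseq d₁ d₃ n)) ∣ Fseq 0 B C d₁ d₂ d₃ n) ↔
    (p:ℤ)^e ∣ B + C * Dseq d₂ d₃ n := by
  have hD₁ne : Dseq d₁ d₃ n ≠ 0 := Dseq_ne hd₁ d₃ hn
  obtain ⟨U₁, hU₁, hU₁nd⟩ := val_decomp hp _ hD₁ne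
  have hF : Fseq 0 B C d₁ d₂ d₃ n =
      (p:ℤ)^(padicValInt p (Dseq d₁ d₃ n)) * (U₁ * (B + C * Dseq d₂ d₃ n)) := by
    have h1 : Fseq 0 B C d₁ d₂ d₃ n = Dseq d₁ d₃ n * (B + C * Dseq d₂ d₃ n) := by
      rw [Fseq]; ring
    rw [h1]
    conv_lhs => rw [hU₁]
    ring
  rw [hF, show e + padicValInt p (Dseq d₁ d₃ n) = padicValInt p (Dseq d₁ d₃ n) + e by omega,
    cancel_exact_pow hp]
  constructor
  · intro h
    exact cancel_unit hp hU₁nd h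
  · intro h
    exact Dvd.dvd.mul_left h U₁

/-- Deep region with `A = 0` : eventually periodic. -/
theorem SdeepA0 (hp : p.Prime) (e K : ℕ) (B C : ℤ) (d₁ d₂ d₃ : ℕ) (hd₁ : 2 ≤ d₁) :
    EvPer {n : ℕ | n ∈ Cset p e 0 B C d₁ d₂ d₃ ∧ (p:ℤ)^K ∣ Dseq d₁ d₃ n} := by
  apply EvPer.congr_above (d₃+1) _
    (EvPer.inter (evper_BCD hp e B C d₂ d₃) (evper_Vdeep hp K d₁ d₃).1)
  intro n hn
  simp only [Set.mem_setOf_eq, Set.mem_inter_iff, mem_Cset_iff]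
  rw [condA0 hp e B C d₁ d₂ d₃ hd₁ (by omega)]

/-- pointwise: condition fails when `v₁` is very deep but `v₂` is bounded (`A ≠ 0`). -/
theorem deepFalse (hp : p.Prime) (e : ℕ) (A B C : ℤ) (hA : A ≠ 0) (d₁ d₂ d₃ : ℕ)
    (hd₁ : 2 ≤ d₁) (hd₂ : 2 ≤ d₂) (Kb : ℕ) {n : ℕ} (hn : d₃ < n)
    (hdeep : (p:ℤ)^(padicValInt p A + Kb + e + 1) ∣ Dseq d₁ d₃ n)
    (hv₂b : ¬ ((p:ℤ)^Kb ∣ Dseq d₂ d₃ n)) :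
    ¬ (n ∈ Cset p e A B C d₁ d₂ d₃) := by
  set a₀ := padicValInt p A with ha₀
  intro hc
  rw [mem_Cset_iff] at hc
  have hD₁ne : Dseq d₁ d₃ n ≠ 0 := Dseq_ne hd₁ d₃ hn
  have hD₂ne : Dseq d₂ d₃ n ≠ 0 := Dseq_ne hd₂ d₃ hn
  set v₁ := padicValInt p (Dseq d₁ d₃ n) with hv₁
  set v₂ := padicValInt p (Dseq d₂ d₃ n) with hv₂
  have hv₁K : a₀ + Kb + e + 1 ≤ v₁ := (val_dvd_iff hp _ hD₁ne _).mp hdeep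
  have hv₂K : v₂ < Kb := by
    by_contra hcon
    exact hv₂b ((val_dvd_iff hp _ hD₂ne Kb).mpr (by omega))
  have hvA : padicValInt p (A * Dseq d₂ d₃ n) = a₀ + v₂ := val_mul hp hA hD₂ne
  have hrest : (p:ℤ)^(a₀ + v₂ + 1) ∣ Dseq d₁ d₃ n * (B + C * Dseq d₂ d₃ n) := by
    apply Dvd.dvd.mul_right
    exact dvd_trans (pow_dvd_pow _ (by omega)) (val_pow_dvd hp _)
  have hsplit : A * Dseq d₂ d₃ n =
      Fseq A B C d₁ d₂ d₃ n - Dseq d₁ d₃ n * (B + C * Dseq d₂ d₃ n) := by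
    rw [Fseq]; ring
  have hdvdA : (p:ℤ)^(a₀ + v₂ + 1) ∣ A * Dseq d₂ d₃ n := by
    rw [hsplit]
    exact dvd_sub (dvd_trans (pow_dvd_pow _ (by omega)) hc) hrest
  rw [val_dvd_iff hp _ (mul_ne_zero hA hD₂ne), hvA] at hdvdA
  omega

/-- Case III : `p ∤ d₁`, `p ∤ d₃`, `d₃ ≥ 1`. -/
theorem caseIII (hp : p.Prime) (e : ℕ) (A B C : ℤ) (d₁ d₂ d₃ : ℕ)
    (hd₁ : 2 ≤ d₁) (hd₂ : 2 ≤ d₂) (hd₃ : 1 ≤ d₃)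
    (hpd₁ : ¬ p ∣ d₁) (hpd₃ : ¬ p ∣ d₃) :
    EvPer (Cset p e A B C d₁ d₂ d₃) := by
  have hppos : 0 < p := hp.pos
  have hsplit : ∀ K : ℕ, EvPer {n : ℕ | n ∈ Cset p e A B C d₁ d₂ d₃ ∧
      (p:ℤ)^K ∣ Dseq d₁ d₃ n} → EvPer (Cset p e A B C d₁ d₂ d₃) := by
    intro K hdeepEP
    have hsh := shallow_evper hp e K A B C d₁ d₂ d₃ hd₁ hd₂ hpd₁
    have hU : Cset p e A B C d₁ d₂ d₃ =
        {n : ℕ | n ∈ Cset p e A B C d₁ d₂ d₃ ∧ ¬ ((p:ℤ)^K ∣ Dseq d₁ d₃ n)} ∪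
        {n : ℕ | n ∈ Cset p e A B C d₁ d₂ d₃ ∧ (p:ℤ)^K ∣ Dseq d₁ d₃ n} := by
      ext n
      simp only [Set.mem_union, Set.mem_setOf_eq]
      tauto
    rw [hU]
    exact EvPer.union hsh hdeepEP
  by_cases hA : A = 0
  · subst hA
    exact hsplit 0 (SdeepA0 hp e 0 B C d₁ d₂ d₃ hd₁)
  by_cases hpd₂ : p ∣ d₂
  · -- v₂ = 0 eventually : p ∣ d₂ⁿ, p ∤ d₃
    apply hsplit (padicValInt p A + 1 + e + 1)
    apply EvPer.of_const (d₃+1) False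
    intro n hn
    simp only [iff_false, Set.mem_setOf_eq, not_and]
    intro hc hdeep
    refine deepFalse hp e A B C hA d₁ d₂ d₃ hd₁ hd₂ 1 (by omega : d₃ < n) hdeep ?_ hc
    intro hcon
    have h1 : (p:ℤ) ∣ Dseq d₂ d₃ n := by simpa using hcon
    have h2 : (p:ℤ) ∣ (d₂:ℤ)^n := by
      apply dvd_pow (by exact_mod_cast Int.natCast_dvd_natCast.mpr hpd₂)
      omega
    have h3 : (p:ℤ) ∣ (d₃:ℤ) := by
      have hd : (d₃:ℤ) = (d₂:ℤ)^n - Dseq d₂ d₃ n := by simp [Dseq]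
      rw [hd]
      exact dvd_sub h2 h1
    exact hpd₃ (Int.natCast_dvd_natCast.mp h3)
  · by_cases hW : ∀ K N : ℕ, ∃ n, N ≤ n ∧ (p:ℤ)^K ∣ Dseq d₁ d₃ n ∧ (p:ℤ)^K ∣ Dseq d₂ d₃ n
    · -- doubly deep case
      have hMpos : 0 < p^(e+2) := Nat.pow_pos hppos
      have hco1 : Nat.Coprime d₁ (p^(e+2)) :=
        (Nat.Coprime.pow_right _ (((Nat.Prime.coprime_iff_not_dvd hp).mpr hpd₁).symm))
      have hco2 : Nat.Coprime d₂ (p^(e+2)) :=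
        (Nat.Coprime.pow_right _ (((Nat.Prime.coprime_iff_not_dvd hp).mpr hpd₂).symm))
      obtain ⟨ρ₁, hρ₁pos, hρ₁dvd, hρ₁ord⟩ := ord_exists (p^(e+2)) hMpos d₁ hco1
      obtain ⟨ρ₂, hρ₂pos, hρ₂dvd, hρ₂ord⟩ := ord_exists (p^(e+2)) hMpos d₂ hco2
      set ρ := Nat.lcm ρ₁ ρ₂ with hρ
      have hρpos : 0 < ρ := Nat.lcm_pos hρ₁pos hρ₂pos
      have hρ₁Λ : (p:ℤ)^(e+2) ∣ (d₁:ℤ)^ρ - 1 := by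
        obtain ⟨k, hk⟩ := Nat.dvd_lcm_left ρ₁ ρ₂
        have he : (d₁:ℤ)^ρ - 1 = ((d₁:ℤ)^ρ₁)^k - 1 := by rw [← pow_mul, ← hk]
        rw [he]
        refine dvd_trans ?_ (by simpa using sub_dvd_pow_sub_pow ((d₁:ℤ)^ρ₁) 1 k)
        rw [← cast_ppow]
        exact hρ₁dvd
      have hρ₂Λ : (p:ℤ)^(e+2) ∣ (d₂:ℤ)^ρ - 1 := by
        obtain ⟨k, hk⟩ := Nat.dvd_lcm_right ρ₁ ρ₂
        have he : (d₂:ℤ)^ρ - 1 = ((d₂:ℤ)^ρ₂)^k - 1 := by rw [← pow_mul, ← hk]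
        rw [he]
        refine dvd_trans ?_ (by simpa using sub_dvd_pow_sub_pow ((d₂:ℤ)^ρ₂) 1 k)
        rw [← cast_ppow]
        exact hρ₂dvd
      have hρdvdS : ∀ s : ℕ, (p:ℤ)^(e+2) ∣ (d₁:ℤ)^s - 1 → (p:ℤ)^(e+2) ∣ (d₂:ℤ)^s - 1 →
          ρ ∣ s := by
        intro s h1 h2
        apply Nat.lcm_dvd
        · exact hρ₁ord s (by rw [cast_ppow]; exact h1)
        · exact hρ₂ord s (by rw [cast_ppow]; exact h2)
      apply hsplit (padicValInt p A + (e+2) + e + 1)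
      have hU2 : {n : ℕ | n ∈ Cset p e A B C d₁ d₂ d₃ ∧
          (p:ℤ)^(padicValInt p A + (e+2) + e + 1) ∣ Dseq d₁ d₃ n} =
          {n : ℕ | (n ∈ Cset p e A B C d₁ d₂ d₃ ∧
            (p:ℤ)^(padicValInt p A + (e+2) + e + 1) ∣ Dseq d₁ d₃ n) ∧
            ¬ ((p:ℤ)^(e+2) ∣ Dseq d₂ d₃ n)} ∪
          {n : ℕ | (n ∈ Cset p e A B C d₁ d₂ d₃ ∧
            (p:ℤ)^(padicValInt p A + (e+2) + e + 1) ∣ Dseq d₁ d₃ n) ∧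
            ((p:ℤ)^(e+2) ∣ Dseq d₂ d₃ n)} := by
        ext n
        simp only [Set.mem_union, Set.mem_setOf_eq]
        tauto
      rw [hU2]
      apply EvPer.union
      · -- piece 1 : v₂ shallow, A ≠ 0 : eventually empty
        apply EvPer.of_const (d₃+1) False
        intro n hn
        simp only [iff_false, Set.mem_setOf_eq, not_and]
        rintro ⟨hc, hdeep⟩ hv₂
        exact absurd hc (deepFalse hp e A B C hA d₁ d₂ d₃ hd₁ hd₂ (e+2)
          (by omega : d₃ < n) hdeep hv₂)
      · -- piece 2 : doubly deep, condition is constant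
        by_cases hCONST : (p:ℤ)^(e + padicValInt p ((d₁:ℤ)^ρ - 1)) ∣
            A*((d₂:ℤ)^ρ - 1) + B*((d₁:ℤ)^ρ - 1)
        · apply EvPer.congr_above (d₃+1) _
            (EvPer.inter (evper_Vdeep hp (padicValInt p A + (e+2) + e + 1) d₁ d₃).1
              (evper_Vdeep hp (e+2) d₂ d₃).1)
          intro n hn
          simp only [Set.mem_setOf_eq, Set.mem_inter_iff]
          constructor
          · rintro ⟨⟨_, hdeep⟩, hv₂⟩
            exact ⟨hdeep, hv₂⟩
          · rintro ⟨hdeep, hv₂⟩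
            refine ⟨⟨?_, hdeep⟩, hv₂⟩
            rw [mem_Cset_iff]
            exact (deep_const hp e A B C d₁ d₂ d₃ hd₁ hd₂ hd₃ hpd₁ hpd₂ ρ hρpos
              hρ₁Λ hρ₂Λ hρdvdS hW n (by omega : d₃ < n)
              (dvd_trans (pow_dvd_pow _ (by omega)) hdeep) hv₂).mpr hCONST
        · apply EvPer.of_const (d₃+1) False
          intro n hn
          simp only [iff_false, Set.mem_setOf_eq, not_and]
          rintro ⟨hc, hdeep⟩ hv₂
          apply hCONST
          rw [mem_Cset_iff] at hc
          exact (deep_const hp e A B C d₁ d₂ d₃ hd₁ hd₂ hd₃ hpd₁ hpd₂ ρ hρpos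
            hρ₁Λ hρ₂Λ hρdvdS hW n (by omega : d₃ < n)
            (dvd_trans (pow_dvd_pow _ (by omega)) hdeep) hv₂).mp hc
    · push_neg at hW
      obtain ⟨K₀, N₀, hKN⟩ := hW
      apply hsplit (padicValInt p A + K₀ + e + 1)
      apply EvPer.of_const (max N₀ (d₃+1)) False
      intro n hn
      simp only [iff_false, Set.mem_setOf_eq, not_and]
      intro hc hdeep
      refine deepFalse hp e A B C hA d₁ d₂ d₃ hd₁ hd₂ K₀ (by omega : d₃ < n) hdeep ?_ hc
      intro hcon
      have hd1 : (p:ℤ)^K₀ ∣ Dseq d₁ d₃ n :=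
        dvd_trans (pow_dvd_pow _ (by omega)) hdeep
      exact (hKN n (by omega)) hd1 hcon
end Part4f
section Part4g

/-- Master per-prime theorem: the condition set is eventually periodic. -/
theorem EPmain {p : ℕ} (hp : p.Prime) (e : ℕ) (A B C : ℤ) (d₁ d₂ d₃ : ℕ)
    (hd₁ : 2 ≤ d₁) (hd₂ : 2 ≤ d₂) :
    EvPer (Cset p e A B C d₁ d₂ d₃) := by
  by_cases hpd₁ : p ∣ d₁
  · rcases Nat.eq_zero_or_pos d₃ with rfl | h
    · exact caseIa hp e A B C d₁ d₂ hd₁ hd₂ hpd₁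
    · exact caseIb hp e A B C d₁ d₂ d₃ hpd₁ h
  · by_cases hd₃0 : d₃ = 0
    · subst hd₃0
      exact caseII hp e A B C d₁ d₂ 0 hpd₁ (by simp)
    · by_cases hpd₃ : p ∣ d₃
      · exact caseII hp e A B C d₁ d₂ d₃ hpd₁ (by exact_mod_cast Int.natCast_dvd_natCast.mpr hpd₃)
      · exact caseIII hp e A B C d₁ d₂ d₃ hd₁ hd₂ (by omega) hpd₁ hpd₃
end Part4g
section Part5

/-- geometric sum -/
def geomZ (d : ℕ) (n : ℕ) : ℤ := ∑ i ∈ Finset.range n, (d:ℤ)^i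

/-- `c - a * (1 + d + ... + d^(n-1))` -/
def alphaSeq (c a d : ℕ) (n : ℕ) : ℤ := (c:ℤ) - (a:ℤ) * geomZ d n

theorem geomZ_identity (d : ℕ) (n : ℕ) :
    ((d:ℤ) - 1) * geomZ d n = (d:ℤ)^n - 1 := by
  have := geom_sum_mul ((d:ℤ)) n
  rw [geomZ, mul_comm]
  exact this

/-- The per-prime master theorem, assembled over all primes. -/
theorem arith_evper (m : ℕ) (hm : 0 < m) (a b c₁ c₂ d₁ d₂ d₃ : ℕ)
    (hd₁ : 2 ≤ d₁) (hd₂ : 2 ≤ d₂) :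
    EvPer {n : ℕ | ((m : ℤ) * ((Int.gcd (Dseq d₁ d₃ n) (Dseq d₂ d₃ n) : ℕ) : ℤ)) ∣
      (alphaSeq c₁ a d₁ n * Dseq d₂ d₃ n - alphaSeq c₂ b d₂ n * Dseq d₁ d₃ n)} := by
  set L₁ : ℤ := ((d₁:ℤ)-1)*(c₁:ℤ) + (a:ℤ) - (a:ℤ)*(d₃:ℤ) with hL₁
  set L₂ : ℤ := ((d₂:ℤ)-1)*(c₂:ℤ) + (b:ℤ) - (b:ℤ)*(d₃:ℤ) with hL₂
  set A : ℤ := ((d₂:ℤ)-1)*L₁ with hA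
  set B : ℤ := -(((d₁:ℤ)-1)*L₂) with hB
  set C : ℤ := (b:ℤ)*((d₁:ℤ)-1) - (a:ℤ)*((d₂:ℤ)-1) with hC
  set wn : ℕ := (d₁-1)*(d₂-1) with hwn
  have hwnpos : 0 < wn := by
    rw [hwn]
    exact Nat.mul_pos (by omega) (by omega)
  have hwncast : ((wn:ℕ):ℤ) = ((d₁:ℤ)-1)*((d₂:ℤ)-1) := by
    rw [hwn]
    push_cast [Nat.cast_sub (by omega : 1 ≤ d₁), Nat.cast_sub (by omega : 1 ≤ d₂)]
    ring
  have hwE : ∀ n : ℕ, (wn:ℤ) * (alphaSeq c₁ a d₁ n * Dseq d₂ d₃ n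
      - alphaSeq c₂ b d₂ n * Dseq d₁ d₃ n) = Fseq A B C d₁ d₂ d₃ n := by
    intro n
    have hg₁ := geomZ_identity d₁ n
    have hg₂ := geomZ_identity d₂ n
    rw [hwncast]
    simp only [Fseq, Dseq, alphaSeq, hA, hB, hC, hL₁, hL₂]
    linear_combination (-(a:ℤ))*((d₂:ℤ)-1)*((d₂:ℤ)^n - (d₃:ℤ))*hg₁
      + (b:ℤ)*((d₁:ℤ)-1)*((d₁:ℤ)^n - (d₃:ℤ))*hg₂
  apply EvPer.congr_above (d₃+1) _
    (EvPer.biInter (m*wn).primeFactors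
      (fun p => (Cset p ((m*wn).factorization p) A B C d₁ d₂ d₃) ∪
        (Cset p ((m*wn).factorization p) B A C d₂ d₁ d₃))
      (fun p hp => by
        have hpp : p.Prime := Nat.prime_of_mem_primeFactors hp
        exact EvPer.union (EPmain hpp _ A B C d₁ d₂ d₃ hd₁ hd₂)
          (EPmain hpp _ B A C d₂ d₁ d₃ hd₂ hd₁)))
  intro n hn
  have hn3 : d₃ < n := by omega
  have hD₁pos : 0 < Dseq d₁ d₃ n := Dseq_pos hd₁ d₃ hn3
  have hD₂pos : 0 < Dseq d₂ d₃ n := Dseq_pos hd₂ d₃ hn3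
  have hswap : Fseq B A C d₂ d₁ d₃ n = Fseq A B C d₁ d₂ d₃ n := by
    simp only [Fseq]
    ring
  set g : ℕ := Int.gcd (Dseq d₁ d₃ n) (Dseq d₂ d₃ n) with hgdef
  have hgpos : 0 < g := Int.gcd_pos_of_ne_zero_left _ hD₁pos.ne'
  set E : ℤ := alphaSeq c₁ a d₁ n * Dseq d₂ d₃ n - alphaSeq c₂ b d₂ n * Dseq d₁ d₃ n with hE
  set X : ℕ := E.natAbs with hX
  set XF : ℕ := (Fseq A B C d₁ d₂ d₃ n).natAbs with hXF
  have hXFeq : XF = wn * X := by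
    rw [hXF, hX, ← hwE n, Int.natAbs_mul, Int.natAbs_natCast]
  have hgE : (g:ℤ) ∣ E := by
    rw [hE]
    exact dvd_sub (Dvd.dvd.mul_left (Int.gcd_dvd_right _ _) _) (Dvd.dvd.mul_left (Int.gcd_dvd_left _ _) _)
  have hgX : g ∣ X := by
    rw [hX]
    rw [← Int.natAbs_natCast g]
    exact Int.natAbs_dvd_natAbs.mpr hgE
  have hgXF : g ∣ XF := by
    rw [hXFeq]
    exact Dvd.dvd.mul_left hgX wn
  -- membership characterization
  have hmemiff : ∀ p : ℕ, p.Prime →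
      ((n ∈ Cset p ((m*wn).factorization p) A B C d₁ d₂ d₃ ∨
        n ∈ Cset p ((m*wn).factorization p) B A C d₂ d₁ d₃) ↔
       (p^((m*wn).factorization p + g.factorization p) ∣ XF)) := by
    intro p hpp
    have hv₁ : padicValInt p (Dseq d₁ d₃ n) = (Dseq d₁ d₃ n).natAbs.factorization p := by
      rw [padicValInt, Nat.factorization_def _ hpp]
    have hv₂ : padicValInt p (Dseq d₂ d₃ n) = (Dseq d₂ d₃ n).natAbs.factorization p := by
      rw [padicValInt, Nat.factorization_def _ hpp]
    have hgfac : g.factorization p =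
        min ((Dseq d₁ d₃ n).natAbs.factorization p) ((Dseq d₂ d₃ n).natAbs.factorization p) := by
      rw [hgdef, Int.gcd, Nat.factorization_gcd (Int.natAbs_ne_zero.mpr hD₁pos.ne')
        (Int.natAbs_ne_zero.mpr hD₂pos.ne')]
      rfl
    have hmem1 : n ∈ Cset p ((m*wn).factorization p) A B C d₁ d₂ d₃ ↔
        p^((m*wn).factorization p + padicValInt p (Dseq d₁ d₃ n)) ∣ XF := by
      rw [Cset, Set.mem_setOf_eq, hXF]
    have hmem2 : n ∈ Cset p ((m*wn).factorization p) B A C d₂ d₁ d₃ ↔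
        p^((m*wn).factorization p + padicValInt p (Dseq d₂ d₃ n)) ∣ XF := by
      rw [Cset, Set.mem_setOf_eq, hXF, hswap]
    rw [hmem1, hmem2, hv₁, hv₂, hgfac]
    set u₁ := (Dseq d₁ d₃ n).natAbs.factorization p
    set u₂ := (Dseq d₂ d₃ n).natAbs.factorization p
    constructor
    · rintro (h | h)
      · exact dvd_trans (Nat.pow_dvd_pow p (by omega)) h
      · exact dvd_trans (Nat.pow_dvd_pow p (by omega)) h
    · intro h
      rcases le_total u₁ u₂ with hle | hle
      · left
        rw [show min u₁ u₂ = u₁ by omega] at h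
        exact h
      · right
        rw [show min u₁ u₂ = u₂ by omega] at h
        exact h
  -- main chain
  simp only [Set.mem_setOf_eq, Set.mem_iInter, Set.mem_union]
  by_cases hX0 : X = 0
  · have hEz : E = 0 := Int.natAbs_eq_zero.mp hX0
    have hXFz : XF = 0 := by rw [hXFeq, hX0, Nat.mul_zero]
    constructor
    · intro _ p hp
      left
      rw [Cset, Set.mem_setOf_eq, ← hXF, hXFz]
      exact Nat.dvd_zero _
    · intro _
      rw [← hE, hEz]
      exact dvd_zero _
  · have hXFne : XF ≠ 0 := by
      rw [hXFeq]
      exact Nat.mul_ne_zero (by omega) hX0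
    have step1 : (((m:ℤ)) * (g:ℤ) ∣ E) ↔ (m*g) ∣ X := by
      rw [hX, ← Int.natCast_dvd]
      push_cast
      rfl
    have step2 : (m*g) ∣ X ↔ wn*(m*g) ∣ XF := by
      rw [hXFeq]
      exact (Nat.mul_dvd_mul_iff_left hwnpos).symm
    have hprod_ne : wn*(m*g) ≠ 0 := by positivity
    have step3 : wn*(m*g) ∣ XF ↔
        ∀ p : ℕ, (wn*(m*g)).factorization p ≤ XF.factorization p := by
      rw [← Nat.factorization_le_iff_dvd hprod_ne hXFne]
      exact Finsupp.le_def
    have hfac_split : ∀ p : ℕ, (wn*(m*g)).factorization p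
        = (m*wn).factorization p + g.factorization p := by
      intro p
      rw [show wn*(m*g) = (m*wn)*g by ring,
        Nat.factorization_mul (by positivity) (by omega)]
      rfl
    have step4 : (∀ p : ℕ, (wn*(m*g)).factorization p ≤ XF.factorization p) ↔
        (∀ p ∈ (m*wn).primeFactors,
          p^((m*wn).factorization p + g.factorization p) ∣ XF) := by
      constructor
      · intro h p hp
        have hpp : p.Prime := Nat.prime_of_mem_primeFactors hp
        rw [(Nat.Prime.pow_dvd_iff_le_factorization hpp hXFne)]
        rw [← hfac_split p]
        exact h p
      · intro h p
        by_cases hpp : p.Prime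
        · by_cases hmem : p ∈ (m*wn).primeFactors
          · have := h p hmem
            rw [(Nat.Prime.pow_dvd_iff_le_factorization hpp hXFne)] at this
            rw [hfac_split p]
            exact this
          · have hz : (m*wn).factorization p = 0 := by
              rw [← Nat.support_factorization] at hmem
              exact Finsupp.notMem_support_iff.mp hmem
            rw [hfac_split p, hz, Nat.zero_add]
            have := (Nat.factorization_le_iff_dvd (by omega) hXFne).mpr hgXF
            exact this p
        · rw [hfac_split p]
          rw [Nat.factorization_eq_zero_of_not_prime _ hpp,
            Nat.factorization_eq_zero_of_not_prime _ hpp]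
          simp
    rw [← hE, ← hgdef, step1, step2, step3, step4]
    constructor
    · intro h p hp
      exact (hmemiff p (Nat.prime_of_mem_primeFactors hp)).mpr (h p hp)
    · intro h p hp
      exact (hmemiff p (Nat.prime_of_mem_primeFactors hp)).mp (h p hp)
end Part5
section Part6

theorem zpow_eq_of_dvd_sub {m : ℕ} {ξ : ℂ} (hm : 0 < m) (hξ : IsPrimitiveRoot ξ m) {X Y : ℤ}
    (h : (m:ℤ) ∣ X - Y) : ξ ^ X = ξ ^ Y := by
  have hξne : ξ ≠ 0 := hξ.ne_zero hm.ne'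
  have h1 : ξ^(X-Y) = 1 := (hξ.zpow_eq_one_iff_dvd _).mpr h
  have h2 : ξ^X = ξ^(Y + (X - Y)) := by ring_nf
  rw [h2, zpow_add₀ hξne, h1, mul_one]

/-- Solvability of the simultaneous power equations. -/
theorem exists_sol_iff (m : ℕ) (hm : 0 < m) (ξ : ℂ) (hξ : IsPrimitiveRoot ξ m)
    (α β D₁ D₂ : ℤ) (hD₁ : 0 < D₁) (hD₂ : 0 < D₂) :
    (∃ x : ℂ, x ≠ 0 ∧ x^D₁ = ξ^α ∧ x^D₂ = ξ^β) ↔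
    (m:ℤ) * ((Int.gcd D₁ D₂ : ℕ) : ℤ) ∣ (α * D₂ - β * D₁) := by
  have hξne : ξ ≠ 0 := hξ.ne_zero hm.ne'
  set g : ℕ := Int.gcd D₁ D₂ with hgdef
  have hgpos : 0 < g := Int.gcd_pos_of_ne_zero_left _ hD₁.ne'
  have hgz : ((g:ℕ):ℤ) ≠ 0 := by exact_mod_cast hgpos.ne'
  obtain ⟨D₁', hD₁'⟩ : ((g:ℕ):ℤ) ∣ D₁ := Int.gcd_dvd_left _ _
  obtain ⟨D₂', hD₂'⟩ : ((g:ℕ):ℤ) ∣ D₂ := Int.gcd_dvd_right _ _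
  have hq₁ : D₁ / ((g:ℕ):ℤ) = D₁' := by rw [hD₁']; exact Int.mul_ediv_cancel_left _ hgz
  have hq₂ : D₂ / ((g:ℕ):ℤ) = D₂' := by rw [hD₂']; exact Int.mul_ediv_cancel_left _ hgz
  have hcop : Int.gcd D₁' D₂' = 1 := by
    have h := Int.gcd_div_gcd_div_gcd (hgpos : 0 < Int.gcd D₁ D₂)
    rw [← hgdef, hq₁, hq₂] at h
    exact h
  have hDD : D₁ * D₂' = D₂ * D₁' := by rw [hD₁', hD₂']; ring
  constructor
  · rintro ⟨x, hx, h1, h2⟩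
    have e1 : ξ^(α*D₂') = ξ^(β*D₁') := by
      calc ξ^(α*D₂') = (ξ^α)^D₂' := zpow_mul ξ α D₂'
      _ = (x^D₁)^D₂' := by rw [h1]
      _ = x^(D₁*D₂') := (zpow_mul x D₁ D₂').symm
      _ = x^(D₂*D₁') := by rw [hDD]
      _ = (x^D₂)^D₁' := zpow_mul x D₂ D₁'
      _ = (ξ^β)^D₁' := by rw [h2]
      _ = ξ^(β*D₁') := (zpow_mul ξ β D₁').symm
    have e2 : ξ^(α*D₂' - β*D₁') = 1 := by
      rw [zpow_sub₀ hξne, e1, div_self (zpow_ne_zero _ hξne)]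
    have hdvd : (m:ℤ) ∣ α*D₂' - β*D₁' := (hξ.zpow_eq_one_iff_dvd _).mp e2
    obtain ⟨k, hk⟩ := hdvd
    refine ⟨k, ?_⟩
    have : α * D₂ - β * D₁ = (g:ℤ) * (α*D₂' - β*D₁') := by rw [hD₁', hD₂']; ring
    rw [this, hk]
    ring
  · intro hdvd
    have hm' : (m:ℤ) ∣ α*D₂' - β*D₁' := by
      obtain ⟨k, hk⟩ := hdvd
      refine ⟨k, ?_⟩
      apply mul_left_cancel₀ hgz
      have : α * D₂ - β * D₁ = (g:ℤ) * (α*D₂' - β*D₁') := by rw [hD₁', hD₂']; ring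
      rw [← this, hk]
      ring
    have hbez : D₁' * Int.gcdA D₁' D₂' + D₂' * Int.gcdB D₁' D₂' = 1 := by
      have h := Int.gcd_eq_gcd_ab D₁' D₂'
      rw [hcop] at h
      exact_mod_cast h.symm
    set u := Int.gcdA D₁' D₂' with hu
    set v := Int.gcdB D₁' D₂' with hv
    set y : ℂ := ξ^(u*α + v*β) with hy
    have hyne : y ≠ 0 := zpow_ne_zero _ hξne
    have hy1 : y^D₁' = ξ^α := by
      rw [hy, ← zpow_mul]
      apply zpow_eq_of_dvd_sub hm hξ
      have hid : (u*α + v*β)*D₁' - α = -v * (α*D₂' - β*D₁') + α*(D₁'*u + D₂'*v - 1) := by ring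
      rw [hid, show D₁'*u + D₂'*v - 1 = 0 from by linarith [hbez]]
      simpa using Dvd.dvd.mul_left hm' (-v)
    have hy2 : y^D₂' = ξ^β := by
      rw [hy, ← zpow_mul]
      apply zpow_eq_of_dvd_sub hm hξ
      have hid : (u*α + v*β)*D₂' - β = u * (α*D₂' - β*D₁') + β*(D₁'*u + D₂'*v - 1) := by ring
      rw [hid, show D₁'*u + D₂'*v - 1 = 0 from by linarith [hbez]]
      simpa using Dvd.dvd.mul_left hm' u
    obtain ⟨x, hxg⟩ := IsAlgClosed.exists_pow_nat_eq y hgpos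
    have hxne : x ≠ 0 := by
      intro h0
      rw [h0] at hxg
      rw [zero_pow hgpos.ne'] at hxg
      exact hyne hxg.symm
    refine ⟨x, hxne, ?_, ?_⟩
    · rw [hD₁', zpow_mul, zpow_natCast, hxg, hy1]
    · rw [hD₂', zpow_mul, zpow_natCast, hxg, hy2]

/-- Iterate formula for twisted power maps. -/
theorem iter_formula (ξ : ℂ) (hξne : ξ ≠ 0) (aa : ℕ) (d : ℤ) (χ : ℂ → ℂ)
    (hχ : ∀ y, χ y = ξ^aa * y^d) :
    ∀ (n : ℕ) (x : ℂ), x ≠ 0 →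
      χ^[n] x = ξ^((aa:ℤ) * (∑ i ∈ Finset.range n, d^i)) * x^(d^n) := by
  intro n
  induction n with
  | zero =>
    intro x hx
    simp
  | succ n ih =>
    intro x hx
    rw [Function.iterate_succ_apply', ih x hx, hχ]
    rw [mul_zpow, ← zpow_mul, ← zpow_mul]
    rw [show ξ^aa = ξ^((aa:ℤ)) from (zpow_natCast ξ aa).symm]
    rw [← mul_assoc, ← zpow_add₀ hξne, geom_sum_succ]
    rw [show ((aa:ℤ)) + (aa:ℤ) * (∑ i ∈ Finset.range n, d^i) * d
      = (aa:ℤ) * (d * (∑ i ∈ Finset.range n, d^i) + 1) from by ring]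
    rw [show d^n*d = d^((n:ℕ)+1) from by rw [pow_succ]]

/-- Rearranging the orbit equation. -/
theorem eq_rearrange (ξ x : ℂ) (hξne : ξ ≠ 0) (hx : x ≠ 0) (Aexp Dn : ℤ) (c d₃ : ℕ) :
    (ξ^Aexp * x^Dn = ξ^(c:ℕ) * x^(d₃:ℕ)) ↔ x^(Dn - (d₃:ℤ)) = ξ^((c:ℤ) - Aexp) := by
  have hc : ξ^(c:ℕ) = ξ^((c:ℤ)) := (zpow_natCast ξ c).symm
  have hd : x^(d₃:ℕ) = x^((d₃:ℤ)) := (zpow_natCast x d₃).symm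
  rw [hc, hd, zpow_sub₀ hx, zpow_sub₀ hξne]
  rw [div_eq_div_iff (zpow_ne_zero _ hx) (zpow_ne_zero _ hξne)]
  constructor
  · intro h
    linear_combination h
  · intro h
    linear_combination h
end Part6
/-- Corollary 4.4: the set of `n` for which a system of twisted power-map
equations admits a nonzero solution is a finite union of arithmetic progressions. -/
theorem stmt13 (a b c₁ c₂ d₃ : ℕ) (m : ℕ) (hm : 0 < m) (ξ : ℂ)
    (hξ : IsPrimitiveRoot ξ m) (d₁ d₂ : ℤ) (hd₁ : 1 < d₁) (hd₂ : 1 < d₂)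
    (φ ψ : ℂ → ℂ)
    (hφ : ∀ y, φ y = ξ ^ a * y ^ d₁) (hψ : ∀ y, ψ y = ξ ^ b * y ^ d₂) :
    ∃ s : Finset (ℕ × ℕ),
      {n : ℕ | 1 ≤ n ∧ ∃ x : ℂ, x ≠ 0 ∧
        φ^[n] x = ξ ^ c₁ * x ^ d₃ ∧ ψ^[n] x = ξ ^ c₂ * x ^ d₃} =
      ⋃ p ∈ s, {n : ℕ | ∃ k : ℕ, n = p.1 + p.2 * k} := by
  have hξne : ξ ≠ 0 := hξ.ne_zero hm.ne'
  set e₁ : ℕ := d₁.toNat with he₁def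
  set e₂ : ℕ := d₂.toNat with he₂def
  have he₁ : ((e₁:ℕ):ℤ) = d₁ := Int.toNat_of_nonneg (by omega)
  have he₂ : ((e₂:ℕ):ℤ) = d₂ := Int.toNat_of_nonneg (by omega)
  have he₁2 : 2 ≤ e₁ := by omega
  have he₂2 : 2 ≤ e₂ := by omega
  apply EvPer.finite_union_AP
  apply EvPer.congr_above (d₃+1) _ (arith_evper m hm a b c₁ c₂ e₁ e₂ d₃ he₁2 he₂2)
  intro n hn
  simp only [Set.mem_setOf_eq]
  have h1n : 1 ≤ n := by omega
  have hcastD₁ : Dseq e₁ d₃ n = d₁^n - (d₃:ℤ) := by rw [Dseq, he₁]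
  have hcastD₂ : Dseq e₂ d₃ n = d₂^n - (d₃:ℤ) := by rw [Dseq, he₂]
  have hcastα : alphaSeq c₁ a e₁ n = (c₁:ℤ) - (a:ℤ) * (∑ i ∈ Finset.range n, d₁^i) := by
    rw [alphaSeq, geomZ, he₁]
  have hcastβ : alphaSeq c₂ b e₂ n = (c₂:ℤ) - (b:ℤ) * (∑ i ∈ Finset.range n, d₂^i) := by
    rw [alphaSeq, geomZ, he₂]
  have hD₁pos : 0 < Dseq e₁ d₃ n := Dseq_pos he₁2 d₃ (by omega)
  have hD₂pos : 0 < Dseq e₂ d₃ n := Dseq_pos he₂2 d₃ (by omega)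
  have hx_iff : ∀ x : ℂ, x ≠ 0 →
      ((φ^[n] x = ξ ^ c₁ * x ^ d₃ ∧ ψ^[n] x = ξ ^ c₂ * x ^ d₃) ↔
       (x^(Dseq e₁ d₃ n) = ξ^(alphaSeq c₁ a e₁ n) ∧
        x^(Dseq e₂ d₃ n) = ξ^(alphaSeq c₂ b e₂ n))) := by
    intro x hx
    rw [iter_formula ξ hξne a d₁ φ hφ n x hx, iter_formula ξ hξne b d₂ ψ hψ n x hx]
    rw [eq_rearrange ξ x hξne hx _ _ c₁ d₃, eq_rearrange ξ x hξne hx _ _ c₂ d₃]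
    rw [hcastD₁, hcastD₂, hcastα, hcastβ]
  have hsol := exists_sol_iff m hm ξ hξ (alphaSeq c₁ a e₁ n) (alphaSeq c₂ b e₂ n)
    (Dseq e₁ d₃ n) (Dseq e₂ d₃ n) hD₁pos hD₂pos
  constructor
  · rintro ⟨-, x, hx, h1, h2⟩
    have := (hx_iff x hx).mp ⟨h1, h2⟩
    exact hsol.mp ⟨x, hx, this.1, this.2⟩
  · intro h
    obtain ⟨x, hx, h1, h2⟩ := hsol.mpr h
    have := (hx_iff x hx).mpr ⟨h1, h2⟩
    exact ⟨h1n, x, hx, this.1, this.2⟩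
end

section
/- Define f : ℂ⁵ → ℂ⁵ by f(x₁, x₂, x₃, x₄, x₅) = (x₁ + 1, x₂·(x₃ − x₁ − 1), x₃, x₄·(x₅ − x₁ − 1), x₅). Let Z = { (x₁,…,x₅) ∈ ℂ⁵ : x₁ = 0, x₂ = 1, x₄ = 1 } and V = { (x₁,…,x₅) ∈ ℂ⁵ : x₂ = 0, x₄ = 0, x₁ = (x₃ + 1)·(x₅ + 1) }. Then { n ∈ ℕ : there exists z ∈ Z with f^n(z) ∈ V } equals the set of composite numbers { n ∈ ℕ : there exist natural numbers a ≥ 2 and b ≥ 2 with n = a·b }. -/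
/-- Example of Lee–Nam: the return-time set equals the set of composite numbers. -/
theorem stmt18 (f : ℂ × ℂ × ℂ × ℂ × ℂ → ℂ × ℂ × ℂ × ℂ × ℂ)
    (hf : ∀ x₁ x₂ x₃ x₄ x₅ : ℂ,
      f (x₁, x₂, x₃, x₄, x₅) =
        (x₁ + 1, x₂ * (x₃ - x₁ - 1), x₃, x₄ * (x₅ - x₁ - 1), x₅))
    (Z V : Set (ℂ × ℂ × ℂ × ℂ × ℂ))
    (hZ : Z = {p | p.1 = 0 ∧ p.2.1 = 1 ∧ p.2.2.2.1 = 1})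
    (hV : V = {p | p.2.1 = 0 ∧ p.2.2.2.1 = 0 ∧
      p.1 = (p.2.2.1 + 1) * (p.2.2.2.2 + 1)}) :
    {n : ℕ | ∃ z ∈ Z, f^[n] z ∈ V} =
      {n : ℕ | ∃ a b : ℕ, 2 ≤ a ∧ 2 ≤ b ∧ n = a * b} := by
  have key : ∀ (c e : ℂ) (n : ℕ), f^[n] (0, 1, c, 1, e) =
      ((n : ℂ), ∏ k ∈ Finset.range n, (c - k - 1), c,
        ∏ k ∈ Finset.range n, (e - k - 1), e) := by
    intro c e n
    induction n with
    | zero => simp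
    | succ n ih =>
      rw [Function.iterate_succ_apply', ih, hf]
      push_cast
      rw [Finset.prod_range_succ, Finset.prod_range_succ]
  ext n
  simp only [Set.mem_setOf_eq, hZ, hV]
  constructor
  · rintro ⟨z, ⟨h1, h2, h4⟩, hv⟩
    obtain ⟨x₁, x₂, x₃, x₄, x₅⟩ := z
    simp only at h1 h2 h4
    subst h1 h2 h4
    rw [key] at hv
    obtain ⟨hp, hq, hn⟩ := hv
    simp only at hp hq hn
    rw [Finset.prod_eq_zero_iff] at hp hq
    obtain ⟨k, hk, hkc⟩ := hp
    obtain ⟨l, hl, hle⟩ := hq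
    have hc : x₃ = (k : ℂ) + 1 := by linear_combination hkc
    have he : x₅ = (l : ℂ) + 1 := by linear_combination hle
    refine ⟨k + 2, l + 2, by omega, by omega, ?_⟩
    have : (n : ℂ) = ((k + 2) * (l + 2) : ℕ) := by
      rw [hn, hc, he]; push_cast; ring
    exact_mod_cast this
  · rintro ⟨a, b, ha, hb, rfl⟩
    refine ⟨(0, 1, ((a : ℂ) - 1), 1, ((b : ℂ) - 1)), ⟨rfl, rfl, rfl⟩, ?_⟩
    rw [key]
    dsimp only
    refine ⟨?_, ?_, ?_⟩
    · apply Finset.prod_eq_zero (i := a - 2)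
      · simp only [Finset.mem_range]
        calc a - 2 < a := by omega
          _ ≤ a * b := Nat.le_mul_of_pos_right a (by omega)
      · have : ((a - 2 : ℕ) : ℂ) = (a : ℂ) - 2 := by
          push_cast [Nat.cast_sub (by omega : 2 ≤ a)]; ring
        rw [this]; ring
    · apply Finset.prod_eq_zero (i := b - 2)
      · simp only [Finset.mem_range]
        calc b - 2 < b := by omega
          _ ≤ a * b := Nat.le_mul_of_pos_left b (by omega)
      · have : ((b - 2 : ℕ) : ℂ) = (b : ℂ) - 2 := by
          push_cast [Nat.cast_sub (by omega : 2 ≤ b)]; ring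
        rw [this]; ring
    · push_cast; ring
end
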